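/- arXiv:0809.1714 — 6 statements merged into one kernel-verified Lean document; each statement's English description precedes it below -/
import Mathlib

section
/- Let ε and B be bounded self-adjoint operators on a Hilbert space with 0 ≤ B ≤ 1. Then ‖[ε, B]‖ ≤ ‖ε‖. -/
open ContinuousLinearMap

theorem commutator_effect_norm_le {H : Type*} [NormedAddCommGroup H] [InnerProductSpace ℂ H]
    [CompleteSpace H] (ε B : H →L[ℂ] H) (hε : IsSelfAdjoint ε) (hB : IsSelfAdjoint B)
    (hB0 : B.IsPositive) (hB1 : (1 - B).IsPositive) :
    ‖ε * B - B * ε‖ ≤ ‖ε‖ := by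
  have hB0' : (0 : H →L[ℂ] H) ≤ B := (nonneg_iff_isPositive B).mpr hB0
  have hB1' : B ≤ 1 := by rw [le_def]; exact hB1
  -- spectrum of B is contained in [0,1]
  have hspec : ∀ x ∈ spectrum ℝ B, 0 ≤ x ∧ x ≤ 1 := by
    intro x hx
    refine ⟨spectrum_nonneg_of_nonneg hB0' hx, ?_⟩
    have h1 : B ≤ algebraMap ℝ (H →L[ℂ] H) 1 := by simpa using hB1'
    exact (le_algebraMap_iff_spectrum_le hB).mp h1 x hx
  -- B - B*B ≥ 0
  have hkey : (0 : H →L[ℂ] H) ≤ B - B * B := by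
    have hcfc : cfc (fun x : ℝ => x - x ^ 2) B = B - B * B := by
      rw [cfc_sub (fun x : ℝ => x) (fun x : ℝ => x ^ 2) B (by fun_prop) (by fun_prop),
        cfc_id' ℝ B, cfc_pow_id B 2, sq]
    rw [← hcfc]
    refine cfc_nonneg fun x hx => ?_
    obtain ⟨h0, h1⟩ := hspec x hx
    nlinarith
  set A : H →L[ℂ] H := B - (1/2 : ℝ) • 1 with hAdef
  have hA : IsSelfAdjoint A := by
    simp [hAdef, IsSelfAdjoint, star_sub, star_smul, hB.star_eq]
  -- A * A = (1/4)•1 - (B - B*B)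
  have hAA : A * A = (1/4 : ℝ) • 1 - (B - B * B) := by
    rw [hAdef]
    simp only [sub_mul, mul_sub, smul_mul_assoc, mul_smul_comm, one_mul, mul_one, smul_smul]
    module
  have hAApos : (0 : H →L[ℂ] H) ≤ A * A := by
    have := star_mul_self_nonneg A
    rwa [hA.star_eq] at this
  have hAAle : A * A ≤ algebraMap ℝ (H →L[ℂ] H) (1/4) := by
    rw [Algebra.algebraMap_eq_smul_one, hAA]
    calc (1/4 : ℝ) • 1 - (B - B * B) ≤ (1/4 : ℝ) • (1 : H →L[ℂ] H) - 0 := by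
          exact sub_le_sub_left hkey _
      _ = (1/4 : ℝ) • 1 := by rw [sub_zero]
  have hnAA : ‖A * A‖ ≤ 1/4 :=
    (CStarAlgebra.norm_le_iff_le_algebraMap (A * A) (by norm_num) hAApos).mpr hAAle
  have hnA : ‖A‖ ≤ 1/2 := by
    have hsq : ‖A‖ * ‖A‖ = ‖A * A‖ := by
      nth_rewrite 3 [← hA.star_eq]
      rw [CStarRing.norm_star_mul_self]
    nlinarith [norm_nonneg A, hnAA]
  -- [ε, B] = [ε, A]
  have hcomm : ε * B - B * ε = ε * A - A * ε := by
    rw [hAdef]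
    simp only [mul_sub, sub_mul, mul_smul_comm, smul_mul_assoc, mul_one, one_mul]
    abel
  calc ‖ε * B - B * ε‖ = ‖ε * A - A * ε‖ := by rw [hcomm]
    _ ≤ ‖ε * A‖ + ‖A * ε‖ := norm_sub_le _ _
    _ ≤ ‖ε‖ * ‖A‖ + ‖A‖ * ‖ε‖ := add_le_add (norm_mul_le _ _) (norm_mul_le _ _)
    _ ≤ ‖ε‖ * (1/2) + (1/2) * ‖ε‖ := by
        gcongr
    _ = ‖ε‖ := by ring
end

section
/- Let A, B be effect operators (0 ≤ A ≤ 1, 0 ≤ B ≤ 1) on a Hilbert space H, let T be a unital positive map from a commutative von Neumann algebra M to B(H), and let E, F ∈ M be projections. Define error norms α := ‖T(E) - A‖ and β := ‖T(F) - B‖. Then ‖[A, B]‖ ≤ 2αβ + α + β + 2(2α + ‖A - A²‖)^{1/2}(2β + ‖B - B²‖)^{1/2}. -/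
set_option maxHeartbeats 1000000
set_option synthInstance.maxHeartbeats 1000000

namespace TradeoffAux

variable {H : Type*} [NormedAddCommGroup H] [InnerProductSpace ℂ H] [CompleteSpace H]

lemma sum_norm_sq_le (n : ℕ) (X : Fin n → (H →L[ℂ] H)) (w : H) :
    ∑ i, ‖X i w‖ ^ 2 ≤ ‖∑ i, star (X i) * X i‖ * ‖w‖ ^ 2 := by
  have h1 : ∑ i, ‖X i w‖ ^ 2 = RCLike.re (inner ℂ w ((∑ i, star (X i) * X i) w) : ℂ) := by
    rw [ContinuousLinearMap.sum_apply, inner_sum, map_sum]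
    refine Finset.sum_congr rfl fun i _ => ?_
    rw [ContinuousLinearMap.mul_apply, ContinuousLinearMap.star_eq_adjoint,
      ContinuousLinearMap.adjoint_inner_right, inner_self_eq_norm_sq]
  rw [h1]
  calc RCLike.re (inner ℂ w ((∑ i, star (X i) * X i) w) : ℂ)
      ≤ ‖w‖ * ‖(∑ i, star (X i) * X i) w‖ := re_inner_le_norm _ _
    _ ≤ ‖w‖ * (‖∑ i, star (X i) * X i‖ * ‖w‖) := by
        gcongr
        exact ContinuousLinearMap.le_opNorm _ _
    _ = ‖∑ i, star (X i) * X i‖ * ‖w‖ ^ 2 := by ring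

lemma re_inner_sum_le (n : ℕ) (X Y : Fin n → (H →L[ℂ] H)) (w v : H) :
    RCLike.re (inner ℂ w ((∑ i, star (X i) * Y i) v) : ℂ) ≤
      (Real.sqrt ‖∑ i, star (X i) * X i‖ * ‖w‖) *
        (Real.sqrt ‖∑ i, star (Y i) * Y i‖ * ‖v‖) := by
  have h2 : RCLike.re (inner ℂ w ((∑ i, star (X i) * Y i) v) : ℂ)
      = ∑ i, RCLike.re (inner ℂ (X i w) (Y i v) : ℂ) := by
    rw [ContinuousLinearMap.sum_apply, inner_sum, map_sum]
    refine Finset.sum_congr rfl fun i _ => ?_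
    rw [ContinuousLinearMap.mul_apply, ContinuousLinearMap.star_eq_adjoint,
      ContinuousLinearMap.adjoint_inner_right]
  rw [h2]
  have h3 : ∑ i, RCLike.re (inner ℂ (X i w) (Y i v) : ℂ) ≤ ∑ i, ‖X i w‖ * ‖Y i v‖ :=
    Finset.sum_le_sum fun i _ => re_inner_le_norm _ _
  have h4 : ∑ i, ‖X i w‖ * ‖Y i v‖ ≤
      Real.sqrt (∑ i, ‖X i w‖ ^ 2) * Real.sqrt (∑ i, ‖Y i v‖ ^ 2) := by
    rw [← Real.sqrt_mul (by positivity)]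
    have := Finset.sum_mul_sq_le_sq_mul_sq Finset.univ (fun i => ‖X i w‖) (fun i => ‖Y i v‖)
    calc ∑ i, ‖X i w‖ * ‖Y i v‖
        = Real.sqrt ((∑ i, ‖X i w‖ * ‖Y i v‖) ^ 2) := by
          rw [Real.sqrt_sq (by positivity)]
      _ ≤ _ := Real.sqrt_le_sqrt this
  have h5 : Real.sqrt (∑ i, ‖X i w‖ ^ 2) ≤
      Real.sqrt ‖∑ i, star (X i) * X i‖ * ‖w‖ := by
    rw [show Real.sqrt ‖∑ i, star (X i) * X i‖ * ‖w‖
        = Real.sqrt (‖∑ i, star (X i) * X i‖ * ‖w‖ ^ 2) by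
      rw [Real.sqrt_mul (norm_nonneg _), Real.sqrt_sq (norm_nonneg _)]]
    exact Real.sqrt_le_sqrt (sum_norm_sq_le n X w)
  have h6 : Real.sqrt (∑ i, ‖Y i v‖ ^ 2) ≤
      Real.sqrt ‖∑ i, star (Y i) * Y i‖ * ‖v‖ := by
    rw [show Real.sqrt ‖∑ i, star (Y i) * Y i‖ * ‖v‖
        = Real.sqrt (‖∑ i, star (Y i) * Y i‖ * ‖v‖ ^ 2) by
      rw [Real.sqrt_mul (norm_nonneg _), Real.sqrt_sq (norm_nonneg _)]]
    exact Real.sqrt_le_sqrt (sum_norm_sq_le n Y v)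
  calc ∑ i, RCLike.re (inner ℂ (X i w) (Y i v) : ℂ)
      ≤ Real.sqrt (∑ i, ‖X i w‖ ^ 2) * Real.sqrt (∑ i, ‖Y i v‖ ^ 2) := h3.trans h4
    _ ≤ _ := by
        apply mul_le_mul h5 h6 (Real.sqrt_nonneg _)
        positivity

lemma cs (n : ℕ) (X Y : Fin n → (H →L[ℂ] H)) :
    ‖∑ i, star (X i) * Y i‖ ≤
      Real.sqrt ‖∑ i, star (X i) * X i‖ * Real.sqrt ‖∑ i, star (Y i) * Y i‖ := by
  refine ContinuousLinearMap.opNorm_le_bound _ (by positivity) fun v => ?_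
  set Z : H →L[ℂ] H := ∑ i, star (X i) * Y i with hZ
  rcases eq_or_ne (Z v) 0 with hv | hv
  · rw [hv, norm_zero]; positivity
  have key : ‖Z v‖ ^ 2 ≤ (Real.sqrt ‖∑ i, star (X i) * X i‖ * ‖Z v‖) *
      (Real.sqrt ‖∑ i, star (Y i) * Y i‖ * ‖v‖) := by
    have h1 : ‖Z v‖ ^ 2 = RCLike.re (inner ℂ (Z v) (Z v) : ℂ) := (inner_self_eq_norm_sq _).symm
    rw [h1, hZ]
    exact re_inner_sum_le n X Y (Z v) v
  have hzpos : 0 < ‖Z v‖ := norm_pos_iff.mpr hv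
  nlinarith [hzpos, Real.sqrt_nonneg ‖∑ i, star (X i) * X i‖,
    Real.sqrt_nonneg ‖∑ i, star (Y i) * Y i‖, norm_nonneg v]

lemma cs_pos (n : ℕ) (R D D' : Fin n → (H →L[ℂ] H)) (hR : ∀ i, 0 ≤ R i)
    (hD : ∀ i, IsSelfAdjoint (D i)) (hD' : ∀ i, IsSelfAdjoint (D' i)) :
    ‖∑ i, D i * R i * D' i‖ ≤
      Real.sqrt ‖∑ i, D i * R i * D i‖ * Real.sqrt ‖∑ i, D' i * R i * D' i‖ := by
  have e : ∀ (U V : Fin n → (H →L[ℂ] H)), (∀ i, IsSelfAdjoint (U i)) → ∀ i,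
      star (CFC.sqrt (R i) * U i) * (CFC.sqrt (R i) * V i) = U i * R i * V i := by
    intro U V hU i
    rw [star_mul, (hU i).star_eq,
      (IsSelfAdjoint.of_nonneg (CFC.sqrt_nonneg (a := R i))).star_eq,
      mul_assoc (U i), ← mul_assoc (CFC.sqrt (R i)),
      CFC.sqrt_mul_sqrt_self (R i) (hR i), ← mul_assoc]
  have key := cs n (fun i => CFC.sqrt (R i) * D i) (fun i => CFC.sqrt (R i) * D' i)
  simp only [e D D' hD, e D D hD, e D' D' hD'] at key
  exact key

lemma eff_sub_sq_nonneg (P : H →L[ℂ] H) (h0 : 0 ≤ P) (h1 : P ≤ 1) : 0 ≤ P - P ^ 2 := by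
  obtain ⟨s, hsa, hmul⟩ : ∃ s : H →L[ℂ] H, star s = s ∧ s * s = P :=
    ⟨CFC.sqrt P, (IsSelfAdjoint.of_nonneg (CFC.sqrt_nonneg (a := P))).star_eq,
      CFC.sqrt_mul_sqrt_self P h0⟩
  have key : s * (1 - P) * s = P - P ^ 2 := by
    rw [← hmul]; noncomm_ring
  have := star_left_conjugate_nonneg (sub_nonneg.mpr h1) s
  rwa [hsa, key] at this

lemma eff_norm_le_one (P : H →L[ℂ] H) (h0 : 0 ≤ P) (h1 : P ≤ 1) : ‖P‖ ≤ 1 :=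
  (CStarAlgebra.norm_le_norm_of_nonneg_of_le h0 h1).trans ContinuousLinearMap.norm_id_le

lemma comm_le (P X : H →L[ℂ] H) (h0 : 0 ≤ P) (h1 : P ≤ 1) :
    ‖P * X - X * P‖ ≤ ‖X‖ := by
  set R : H →L[ℂ] H := P + P - 1 with hR
  have hsa : star R = R := by
    have hP : star P = P := (IsSelfAdjoint.of_nonneg h0).star_eq
    simp [hR, star_sub, star_add, hP]
  have hRR : R * R = 1 - ((P - P ^ 2) + (P - P ^ 2) + (P - P ^ 2) + (P - P ^ 2)) := by
    rw [hR]; noncomm_ring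
  have hne : 0 ≤ P - P ^ 2 := eff_sub_sq_nonneg P h0 h1
  have hRR1 : R * R ≤ 1 := by
    rw [hRR]
    exact sub_le_self _ (by positivity)
  have hRR0 : 0 ≤ R * R := by
    have := star_mul_self_nonneg R
    rwa [hsa] at this
  have hnR : ‖R‖ ≤ 1 := by
    have h := CStarAlgebra.norm_le_norm_of_nonneg_of_le hRR0 hRR1
    have h1' : ‖(1 : H →L[ℂ] H)‖ ≤ 1 := ContinuousLinearMap.norm_id_le
    have hsq : ‖star R * R‖ = ‖R‖ * ‖R‖ := CStarRing.norm_star_mul_self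
    rw [hsa] at hsq
    nlinarith [norm_nonneg R]
  have hid : R * X - X * R = (P * X - X * P) + (P * X - X * P) := by
    rw [hR]; noncomm_ring
  have h2 : ‖(P * X - X * P) + (P * X - X * P)‖ = 2 * ‖P * X - X * P‖ := by
    rw [show (P * X - X * P) + (P * X - X * P) = (2 : ℂ) • (P * X - X * P) from
      (two_smul ℂ _).symm, norm_smul]
    simp
  have h3 : ‖R * X - X * R‖ ≤ 2 * ‖X‖ := by
    calc ‖R * X - X * R‖ ≤ ‖R * X‖ + ‖X * R‖ := norm_sub_le _ _
      _ ≤ ‖R‖ * ‖X‖ + ‖X‖ * ‖R‖ := by gcongr <;> exact norm_mul_le _ _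
      _ ≤ 1 * ‖X‖ + ‖X‖ * 1 := by
          have := norm_nonneg X
          gcongr <;> exact hnR
      _ = 2 * ‖X‖ := by ring
  rw [hid, h2] at h3
  linarith

lemma cs_pos4 (R1 R2 R3 R4 D1 D2 D3 D4 E1 E2 E3 E4 : H →L[ℂ] H)
    (h1 : 0 ≤ R1) (h2 : 0 ≤ R2) (h3 : 0 ≤ R3) (h4 : 0 ≤ R4)
    (hD1 : IsSelfAdjoint D1) (hD2 : IsSelfAdjoint D2) (hD3 : IsSelfAdjoint D3)
    (hD4 : IsSelfAdjoint D4)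
    (hE1 : IsSelfAdjoint E1) (hE2 : IsSelfAdjoint E2) (hE3 : IsSelfAdjoint E3)
    (hE4 : IsSelfAdjoint E4) :
    ‖D1 * R1 * E1 + D2 * R2 * E2 + D3 * R3 * E3 + D4 * R4 * E4‖ ≤
      Real.sqrt ‖D1 * R1 * D1 + D2 * R2 * D2 + D3 * R3 * D3 + D4 * R4 * D4‖ *
        Real.sqrt ‖E1 * R1 * E1 + E2 * R2 * E2 + E3 * R3 * E3 + E4 * R4 * E4‖ := by
  have key := cs_pos 4 ![R1, R2, R3, R4] ![D1, D2, D3, D4] ![E1, E2, E3, E4]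
    (by intro i; fin_cases i <;> assumption)
    (by intro i; fin_cases i <;> assumption)
    (by intro i; fin_cases i <;> assumption)
  simpa only [Fin.sum_univ_four, Matrix.cons_val_zero, Matrix.cons_val_one, Matrix.head_cons,
    Matrix.cons_val_two, Matrix.tail_cons, Matrix.cons_val_three] using key

lemma janssens' (R1 R2 R3 : H →L[ℂ] H)
    (h1 : 0 ≤ R1) (h2 : 0 ≤ R2) (h3 : 0 ≤ R3) (h4 : 0 ≤ 1 - (R1 + R2 + R3)) :
    ‖(R1 + R2) * (R1 + R3) - (R1 + R3) * (R1 + R2)‖ ≤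
      2 * Real.sqrt ‖(R1 + R2) - (R1 + R2) ^ 2‖ *
        Real.sqrt ‖(R1 + R3) - (R1 + R3) ^ 2‖ := by
  have hP0 : 0 ≤ R1 + R2 := add_nonneg h1 h2
  have hQ0 : 0 ≤ R1 + R3 := add_nonneg h1 h3
  have hPsa : IsSelfAdjoint (R1 + R2) := IsSelfAdjoint.of_nonneg hP0
  have hQsa : IsSelfAdjoint (R1 + R3) := IsSelfAdjoint.of_nonneg hQ0
  have h1sa : IsSelfAdjoint (1 : H →L[ℂ] H) := IsSelfAdjoint.one _
  have hDsa : IsSelfAdjoint (1 - (R1 + R2)) := h1sa.sub hPsa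
  have hDsa' : IsSelfAdjoint (-(R1 + R2)) := hPsa.neg
  have hEsa : IsSelfAdjoint (1 - (R1 + R3)) := h1sa.sub hQsa
  have hEsa' : IsSelfAdjoint (-(R1 + R3)) := hQsa.neg
  have hXY := cs_pos4 R1 R2 R3 (1 - (R1 + R2 + R3))
    (1 - (R1 + R2)) (1 - (R1 + R2)) (-(R1 + R2)) (-(R1 + R2))
    (1 - (R1 + R3)) (-(R1 + R3)) (1 - (R1 + R3)) (-(R1 + R3))
    h1 h2 h3 h4 hDsa hDsa hDsa' hDsa' hEsa hEsa' hEsa hEsa'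
  have hYX := cs_pos4 R1 R2 R3 (1 - (R1 + R2 + R3))
    (1 - (R1 + R3)) (-(R1 + R3)) (1 - (R1 + R3)) (-(R1 + R3))
    (1 - (R1 + R2)) (1 - (R1 + R2)) (-(R1 + R2)) (-(R1 + R2))
    h1 h2 h3 h4 hEsa hEsa' hEsa hEsa' hDsa hDsa hDsa' hDsa'
  have I1 : (1 - (R1 + R2)) * R1 * (1 - (R1 + R3)) + (1 - (R1 + R2)) * R2 * (-(R1 + R3)) +
      (-(R1 + R2)) * R3 * (1 - (R1 + R3)) +
      (-(R1 + R2)) * (1 - (R1 + R2 + R3)) * (-(R1 + R3)) =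
      R1 - (R1 + R2) * (R1 + R3) := by noncomm_ring
  have I2 : (1 - (R1 + R2)) * R1 * (1 - (R1 + R2)) + (1 - (R1 + R2)) * R2 * (1 - (R1 + R2)) +
      (-(R1 + R2)) * R3 * (-(R1 + R2)) +
      (-(R1 + R2)) * (1 - (R1 + R2 + R3)) * (-(R1 + R2)) =
      (R1 + R2) - (R1 + R2) ^ 2 := by noncomm_ring
  have I3 : (1 - (R1 + R3)) * R1 * (1 - (R1 + R3)) + (-(R1 + R3)) * R2 * (-(R1 + R3)) +
      (1 - (R1 + R3)) * R3 * (1 - (R1 + R3)) +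
      (-(R1 + R3)) * (1 - (R1 + R2 + R3)) * (-(R1 + R3)) =
      (R1 + R3) - (R1 + R3) ^ 2 := by noncomm_ring
  have I4 : (1 - (R1 + R3)) * R1 * (1 - (R1 + R2)) + (-(R1 + R3)) * R2 * (1 - (R1 + R2)) +
      (1 - (R1 + R3)) * R3 * (-(R1 + R2)) +
      (-(R1 + R3)) * (1 - (R1 + R2 + R3)) * (-(R1 + R2)) =
      R1 - (R1 + R3) * (R1 + R2) := by noncomm_ring
  rw [I1, I2, I3] at hXY
  rw [I4, I3, I2] at hYX
  have hsplit : (R1 + R2) * (R1 + R3) - (R1 + R3) * (R1 + R2) =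
      (R1 - (R1 + R3) * (R1 + R2)) - (R1 - (R1 + R2) * (R1 + R3)) := by noncomm_ring
  calc ‖(R1 + R2) * (R1 + R3) - (R1 + R3) * (R1 + R2)‖
      = ‖(R1 - (R1 + R3) * (R1 + R2)) - (R1 - (R1 + R2) * (R1 + R3))‖ := by rw [hsplit]
    _ ≤ ‖R1 - (R1 + R3) * (R1 + R2)‖ + ‖R1 - (R1 + R2) * (R1 + R3)‖ := norm_sub_le _ _
    _ ≤ Real.sqrt ‖(R1 + R3) - (R1 + R3) ^ 2‖ * Real.sqrt ‖(R1 + R2) - (R1 + R2) ^ 2‖ +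
        Real.sqrt ‖(R1 + R2) - (R1 + R2) ^ 2‖ * Real.sqrt ‖(R1 + R3) - (R1 + R3) ^ 2‖ :=
        add_le_add hYX hXY
    _ = 2 * Real.sqrt ‖(R1 + R2) - (R1 + R2) ^ 2‖ *
        Real.sqrt ‖(R1 + R3) - (R1 + R3) ^ 2‖ := by ring

end TradeoffAux

theorem tradeoff_single_outcome {H : Type*} [NormedAddCommGroup H] [InnerProductSpace ℂ H]
    [CompleteSpace H] {M : Type*} [NormedCommRing M] [StarRing M] [CStarRing M]
    [NormedAlgebra ℂ M] [PartialOrder M] [StarOrderedRing M]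
    (T : M →ₗ[ℂ] (H →L[ℂ] H)) (hT1 : T 1 = 1)
    (hTpos : ∀ m : M, 0 ≤ m → (T m).IsPositive)
    (E F : M) (hE : IsSelfAdjoint E) (hE2 : E = E ^ 2)
    (hF : IsSelfAdjoint F) (hF2 : F = F ^ 2)
    (A B : H →L[ℂ] H) (hA : IsSelfAdjoint A) (hA0 : A.IsPositive) (hA1 : (1 - A).IsPositive)
    (hB : IsSelfAdjoint B) (hB0 : B.IsPositive) (hB1 : (1 - B).IsPositive) :
    ‖A * B - B * A‖ ≤ 2 * ‖T E - A‖ * ‖T F - B‖ + ‖T E - A‖ + ‖T F - B‖ +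
      2 * Real.sqrt (2 * ‖T E - A‖ + ‖A - A ^ 2‖) *
        Real.sqrt (2 * ‖T F - B‖ + ‖B - B ^ 2‖) := by
  -- basic facts in M
  have projNonneg : ∀ G : M, IsSelfAdjoint G → G * G = G → 0 ≤ G := by
    intro G hG hGG
    have := star_mul_self_nonneg G
    rwa [hG.star_eq, hGG] at this
  have projMulNonneg : ∀ G K : M, IsSelfAdjoint G → G * G = G → IsSelfAdjoint K → K * K = K →
      0 ≤ G * K := by
    intro G K hG hGG hK hKK
    refine projNonneg _ ?_ ?_
    · show star (G * K) = G * K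
      rw [star_mul, hG.star_eq, hK.star_eq, mul_comm]
    · calc (G * K) * (G * K) = (G * G) * (K * K) := by ring
        _ = G * K := by rw [hGG, hKK]
  have hEE : E * E = E := by rw [← pow_two]; exact hE2.symm
  have hFF : F * F = F := by rw [← pow_two]; exact hF2.symm
  have hE'sa : IsSelfAdjoint (1 - E : M) := (IsSelfAdjoint.one M).sub hE
  have hF'sa : IsSelfAdjoint (1 - F : M) := (IsSelfAdjoint.one M).sub hF
  have hE'E' : (1 - E : M) * (1 - E) = 1 - E := by linear_combination hEE
  have hF'F' : (1 - F : M) * (1 - F) = 1 - F := by linear_combination hFF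
  have hE0 : (0 : M) ≤ E := projNonneg E hE hEE
  have hF0 : (0 : M) ≤ F := projNonneg F hF hFF
  have hE'0 : (0 : M) ≤ 1 - E := projNonneg _ hE'sa hE'E'
  have hF'0 : (0 : M) ≤ 1 - F := projNonneg _ hF'sa hF'F'
  have hg1 : (0 : M) ≤ E * F := projMulNonneg E F hE hEE hF hFF
  have hg2 : (0 : M) ≤ E * (1 - F) := projMulNonneg E (1 - F) hE hEE hF'sa hF'F'
  have hg3 : (0 : M) ≤ (1 - E) * F := projMulNonneg (1 - E) F hE'sa hE'E' hF hFF
  have hg4 : (0 : M) ≤ (1 - E) * (1 - F) := projMulNonneg (1 - E) (1 - F) hE'sa hE'E' hF'sa hF'F'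
  -- operator positivity
  have pos : ∀ m : M, 0 ≤ m → (0 : H →L[ℂ] H) ≤ T m := fun m hm =>
    (ContinuousLinearMap.nonneg_iff_isPositive _).mpr (hTpos m hm)
  have hR1 : (0 : H →L[ℂ] H) ≤ T (E * F) := pos _ hg1
  have hR2 : (0 : H →L[ℂ] H) ≤ T (E * (1 - F)) := pos _ hg2
  have hR3 : (0 : H →L[ℂ] H) ≤ T ((1 - E) * F) := pos _ hg3
  have hsum : T (E * F) + T (E * (1 - F)) + T ((1 - E) * F) + T ((1 - E) * (1 - F)) = 1 := by
    rw [← map_add, ← map_add, ← map_add,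
      show E * F + E * (1 - F) + (1 - E) * F + (1 - E) * (1 - F) = 1 by ring, hT1]
  have hR4 : (0 : H →L[ℂ] H) ≤ 1 - (T (E * F) + T (E * (1 - F)) + T ((1 - E) * F)) := by
    have h4eq : 1 - (T (E * F) + T (E * (1 - F)) + T ((1 - E) * F)) = T ((1 - E) * (1 - F)) := by
      rw [← hsum]; abel
    rw [h4eq]; exact pos _ hg4
  have hPsum : T (E * F) + T (E * (1 - F)) = T E := by
    rw [← map_add, show E * F + E * (1 - F) = E by ring]
  have hQsum : T (E * F) + T ((1 - E) * F) = T F := by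
    rw [← map_add, show E * F + (1 - E) * F = F by ring]
  have hJ := TradeoffAux.janssens' (T (E * F)) (T (E * (1 - F))) (T ((1 - E) * F)) hR1 hR2 hR3 hR4
  rw [hPsum, hQsum] at hJ
  -- effect facts
  have hP0 : (0 : H →L[ℂ] H) ≤ T E := pos E hE0
  have hQ0 : (0 : H →L[ℂ] H) ≤ T F := pos F hF0
  have hP1 : T E ≤ 1 := by
    have : (0 : H →L[ℂ] H) ≤ 1 - T E := by
      rw [show (1 : H →L[ℂ] H) - T E = T (1 - E) by rw [map_sub, hT1]]
      exact pos _ hE'0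
    exact sub_nonneg.mp this
  have hQ1 : T F ≤ 1 := by
    have : (0 : H →L[ℂ] H) ≤ 1 - T F := by
      rw [show (1 : H →L[ℂ] H) - T F = T (1 - F) by rw [map_sub, hT1]]
      exact pos _ hF'0
    exact sub_nonneg.mp this
  have hA0' : (0 : H →L[ℂ] H) ≤ A := (ContinuousLinearMap.nonneg_iff_isPositive _).mpr hA0
  have hA1' : A ≤ 1 := sub_nonneg.mp ((ContinuousLinearMap.nonneg_iff_isPositive _).mpr hA1)
  have hB0' : (0 : H →L[ℂ] H) ≤ B := (ContinuousLinearMap.nonneg_iff_isPositive _).mpr hB0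
  have hB1' : B ≤ 1 := sub_nonneg.mp ((ContinuousLinearMap.nonneg_iff_isPositive _).mpr hB1)
  have nA : ‖A‖ ≤ 1 := TradeoffAux.eff_norm_le_one A hA0' hA1'
  have nB : ‖B‖ ≤ 1 := TradeoffAux.eff_norm_le_one B hB0' hB1'
  have n1P : ‖(1 : H →L[ℂ] H) - T E‖ ≤ 1 :=
    TradeoffAux.eff_norm_le_one _ (sub_nonneg.mpr hP1) (sub_le_self 1 hP0)
  have n1Q : ‖(1 : H →L[ℂ] H) - T F‖ ≤ 1 :=
    TradeoffAux.eff_norm_le_one _ (sub_nonneg.mpr hQ1) (sub_le_self 1 hQ0)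
  -- error transfer for the defect norms
  have normP : ‖T E - (T E) ^ 2‖ ≤ 2 * ‖T E - A‖ + ‖A - A ^ 2‖ := by
    have idP : T E - (T E) ^ 2 =
        (A - A ^ 2) + ((1 - T E) * (T E - A) - (T E - A) * A) := by noncomm_ring
    have n1 : ‖(1 - T E) * (T E - A)‖ ≤ ‖T E - A‖ :=
      (norm_mul_le _ _).trans (mul_le_of_le_one_left (norm_nonneg _) n1P)
    have n2 : ‖(T E - A) * A‖ ≤ ‖T E - A‖ :=
      (norm_mul_le _ _).trans (mul_le_of_le_one_right (norm_nonneg _) nA)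
    calc ‖T E - (T E) ^ 2‖
        = ‖(A - A ^ 2) + ((1 - T E) * (T E - A) - (T E - A) * A)‖ := by rw [idP]
      _ ≤ ‖A - A ^ 2‖ + ‖(1 - T E) * (T E - A) - (T E - A) * A‖ := norm_add_le _ _
      _ ≤ ‖A - A ^ 2‖ + (‖(1 - T E) * (T E - A)‖ + ‖(T E - A) * A‖) := by
          gcongr; exact norm_sub_le _ _
      _ ≤ 2 * ‖T E - A‖ + ‖A - A ^ 2‖ := by linarith
  have normQ : ‖T F - (T F) ^ 2‖ ≤ 2 * ‖T F - B‖ + ‖B - B ^ 2‖ := by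
    have idQ : T F - (T F) ^ 2 =
        (B - B ^ 2) + ((1 - T F) * (T F - B) - (T F - B) * B) := by noncomm_ring
    have n1 : ‖(1 - T F) * (T F - B)‖ ≤ ‖T F - B‖ :=
      (norm_mul_le _ _).trans (mul_le_of_le_one_left (norm_nonneg _) n1Q)
    have n2 : ‖(T F - B) * B‖ ≤ ‖T F - B‖ :=
      (norm_mul_le _ _).trans (mul_le_of_le_one_right (norm_nonneg _) nB)
    calc ‖T F - (T F) ^ 2‖
        = ‖(B - B ^ 2) + ((1 - T F) * (T F - B) - (T F - B) * B)‖ := by rw [idQ]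
      _ ≤ ‖B - B ^ 2‖ + ‖(1 - T F) * (T F - B) - (T F - B) * B‖ := norm_add_le _ _
      _ ≤ ‖B - B ^ 2‖ + (‖(1 - T F) * (T F - B)‖ + ‖(T F - B) * B‖) := by
          gcongr; exact norm_sub_le _ _
      _ ≤ 2 * ‖T F - B‖ + ‖B - B ^ 2‖ := by linarith
  -- commutator decomposition
  have idC : A * B - B * A =
      (T E * T F - T F * T E) + (T E * (B - T F) - (B - T F) * T E) +
      ((A - T E) * T F - T F * (A - T E)) +
      ((A - T E) * (B - T F) - (B - T F) * (A - T E)) := by noncomm_ring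
  have c1 : ‖T E * (B - T F) - (B - T F) * T E‖ ≤ ‖T F - B‖ := by
    have := TradeoffAux.comm_le (T E) (B - T F) hP0 hP1
    rwa [norm_sub_rev B (T F)] at this
  have c2 : ‖(A - T E) * T F - T F * (A - T E)‖ ≤ ‖T E - A‖ := by
    have := TradeoffAux.comm_le (T F) (A - T E) hQ0 hQ1
    rw [norm_sub_rev A (T E)] at this
    rwa [norm_sub_rev] at this
  have c3 : ‖(A - T E) * (B - T F) - (B - T F) * (A - T E)‖ ≤
      2 * (‖T E - A‖ * ‖T F - B‖) := by
    calc ‖(A - T E) * (B - T F) - (B - T F) * (A - T E)‖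
        ≤ ‖(A - T E) * (B - T F)‖ + ‖(B - T F) * (A - T E)‖ := norm_sub_le _ _
      _ ≤ ‖A - T E‖ * ‖B - T F‖ + ‖B - T F‖ * ‖A - T E‖ := by
          gcongr <;> exact norm_mul_le _ _
      _ = 2 * (‖T E - A‖ * ‖T F - B‖) := by
          rw [norm_sub_rev A (T E), norm_sub_rev B (T F)]; ring
  have sP : Real.sqrt ‖T E - (T E) ^ 2‖ ≤ Real.sqrt (2 * ‖T E - A‖ + ‖A - A ^ 2‖) :=
    Real.sqrt_le_sqrt normP
  have sQ : Real.sqrt ‖T F - (T F) ^ 2‖ ≤ Real.sqrt (2 * ‖T F - B‖ + ‖B - B ^ 2‖) :=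
    Real.sqrt_le_sqrt normQ
  have hfinal : 2 * Real.sqrt ‖T E - (T E) ^ 2‖ * Real.sqrt ‖T F - (T F) ^ 2‖ ≤
      2 * Real.sqrt (2 * ‖T E - A‖ + ‖A - A ^ 2‖) *
        Real.sqrt (2 * ‖T F - B‖ + ‖B - B ^ 2‖) := by
    have h1 := Real.sqrt_nonneg ‖T F - (T F) ^ 2‖
    have h2 := Real.sqrt_nonneg (2 * ‖T E - A‖ + ‖A - A ^ 2‖)
    nlinarith [Real.sqrt_nonneg ‖T E - (T E) ^ 2‖]
  have N : ‖A * B - B * A‖ ≤ ‖T E * T F - T F * T E‖ + ‖T F - B‖ + ‖T E - A‖ +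
      2 * (‖T E - A‖ * ‖T F - B‖) := by
    calc ‖A * B - B * A‖
        = ‖(T E * T F - T F * T E) + (T E * (B - T F) - (B - T F) * T E) +
          ((A - T E) * T F - T F * (A - T E)) +
          ((A - T E) * (B - T F) - (B - T F) * (A - T E))‖ := by rw [idC]
      _ ≤ ‖(T E * T F - T F * T E) + (T E * (B - T F) - (B - T F) * T E) +
          ((A - T E) * T F - T F * (A - T E))‖ +
          ‖(A - T E) * (B - T F) - (B - T F) * (A - T E)‖ := norm_add_le _ _
      _ ≤ (‖(T E * T F - T F * T E) + (T E * (B - T F) - (B - T F) * T E)‖ +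
          ‖(A - T E) * T F - T F * (A - T E)‖) +
          ‖(A - T E) * (B - T F) - (B - T F) * (A - T E)‖ := by
          gcongr; exact norm_add_le _ _
      _ ≤ ((‖T E * T F - T F * T E‖ + ‖T E * (B - T F) - (B - T F) * T E‖) +
          ‖(A - T E) * T F - T F * (A - T E)‖) +
          ‖(A - T E) * (B - T F) - (B - T F) * (A - T E)‖ := by
          gcongr; exact norm_add_le _ _
      _ ≤ _ := by linarith
  linarith [hJ.trans hfinal]
end

section
/- Let A = {A_a} and B = {B_b} be projection valued measures on a finite-dimensional Hilbert space with finite outcome sets, and suppose there exist a POVM F = {F_x} and functions f_A, f_B such that the marginals f_A(F) = A and f_B(F) = B exactly (i.e., A and B are simultaneously measurable). Then all elements commute: [A_a, B_b] = 0 for all a, b. -/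
open ContinuousLinearMap RCLike
open scoped InnerProductSpace ComplexConjugate

/-- A positive operator whose quadratic form vanishes at `w` kills `w`. -/
lemma pos_apply_eq_zero' {H : Type*} [NormedAddCommGroup H]
    [InnerProductSpace ℂ H] [CompleteSpace H] {T : H →L[ℂ] H} (hT : T.IsPositive)
    {w : H} (h : re ⟪T w, w⟫_ℂ = 0) : T w = 0 := by
  set u := T w with hu
  set n : ℝ := ‖u‖ ^ 2 with hn
  set c : ℝ := re ⟪T u, u⟫_ℂ with hc
  have hc0 : 0 ≤ c := hT.re_inner_nonneg_left u
  have hsymm : (T : H →ₗ[ℂ] H).IsSymmetric :=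
    hT.1
  have key : ∀ t : ℝ, 0 ≤ 2 * t * n + t ^ 2 * c := by
    intro t
    have h0 := hT.re_inner_nonneg_left (w + (t : ℂ) • u)
    have hTuw : ⟪T u, w⟫_ℂ = ⟪u, u⟫_ℂ := by
      exact hsymm u w
    have hTwu : ⟪T w, u⟫_ℂ = ⟪u, u⟫_ℂ := by rw [← hu]
    have hr : re ⟪u, u⟫_ℂ = n := by
      rw [hn]; exact_mod_cast inner_self_eq_norm_sq (𝕜 := ℂ) u
    have hexp : re ⟪T (w + (t : ℂ) • u), w + (t : ℂ) • u⟫_ℂ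
        = 2 * t * n + t ^ 2 * c := by
      simp only [map_add, map_smul, inner_add_left, inner_add_right,
        inner_smul_left, inner_smul_right, Complex.conj_ofReal, hTuw, hTwu,
        ← Complex.ofReal_pow, map_add, RCLike.re_ofReal_mul, h, hr, ← hc]
      simp only [RCLike.re_to_complex] at hr ⊢
      simp only [Complex.add_re, Complex.re_ofReal_mul, ← Complex.ofReal_pow, hr]
      rw [hc]
      simp only [RCLike.re_to_complex]
      rw [show (⟪T w, w⟫_ℂ).re = 0 from h]
      ring
    linarith [h0, hexp.symm.le, hexp.le]
  have hn0 : n = 0 := by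
    by_contra hne
    have hnpos : 0 < n := lt_of_le_of_ne (by positivity) (Ne.symm hne)
    have hk := key (-(n / (c + 1)))
    have hc1 : (0:ℝ) < c + 1 := by linarith
    have hs : n / (c + 1) * (c + 1) = n := div_mul_cancel₀ _ (ne_of_gt hc1)
    have hs2 : (n / (c+1)) * (n / (c+1)) * (c+1) = (n / (c+1)) * n := by
      rw [mul_assoc, hs]
    nlinarith [mul_pos hnpos (div_pos hnpos hc1), sq_nonneg (n / (c+1))]
  have : ‖u‖ = 0 := by
    have := hn ▸ hn0
    nlinarith [norm_nonneg u, sq_nonneg ‖u‖]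
  simpa [hu] using norm_eq_zero.mp this

/-- A self-adjoint idempotent is positive. -/
lemma proj_isPositive' {H : Type*} [NormedAddCommGroup H]
    [InnerProductSpace ℂ H] [CompleteSpace H] {P : H →L[ℂ] H}
    (hP : IsSelfAdjoint P) (hP2 : P * P = P) : P.IsPositive := by
  refine ⟨(isSelfAdjoint_iff_isSymmetric).mp hP, fun v => ?_⟩
  have hsymm : (P : H →ₗ[ℂ] H).IsSymmetric :=
    (isSelfAdjoint_iff_isSymmetric).mp hP
  have h1 : P v = P (P v) := by
    conv_lhs => rw [← hP2]
    rfl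
  have h2 : ⟪P (P v), v⟫_ℂ = ⟪P v, P v⟫_ℂ := hsymm (P v) v
  have : re ⟪P v, v⟫_ℂ = re ⟪P v, P v⟫_ℂ := by
    conv_lhs => rw [h1]
    rw [h2]
  rw [ContinuousLinearMap.reApplyInnerSelf_apply, this]
  exact inner_self_nonneg

/-- If `0 ≤ F ≤ P` with `P` a self-adjoint idempotent, then `P` absorbs `F`. -/
lemma proj_dominates' {H : Type*} [NormedAddCommGroup H]
    [InnerProductSpace ℂ H] [CompleteSpace H] {P F : H →L[ℂ] H}
    (hP : IsSelfAdjoint P) (hP2 : P * P = P) (hF : F.IsPositive)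
    (hG : (P - F).IsPositive) : F * P = F ∧ P * F = F := by
  have h1 : F * P = F := by
    ext v
    have hw : P (v - P v) = 0 := by
      rw [map_sub, sub_eq_zero]
      conv_lhs => rw [← hP2]
      rfl
    have hz : re ⟪P (v - P v), v - P v⟫_ℂ = 0 := by rw [hw]; simp
    have hsum : re ⟪F (v - P v), v - P v⟫_ℂ + re ⟪(P - F) (v - P v), v - P v⟫_ℂ
        = re ⟪P (v - P v), v - P v⟫_ℂ := by
      simp only [ContinuousLinearMap.sub_apply, inner_sub_left, map_sub]
      ring
    have hF0 : re ⟪F (v - P v), v - P v⟫_ℂ = 0 := by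
      have h1 := hF.re_inner_nonneg_left (v - P v)
      have h2 := hG.re_inner_nonneg_left (v - P v)
      linarith [hsum, hz]
    have := pos_apply_eq_zero' hF hF0
    rw [map_sub, sub_eq_zero] at this
    rw [ContinuousLinearMap.mul_apply]
    exact this.symm
  refine ⟨h1, ?_⟩
  have := congrArg star h1
  rwa [star_mul, hP.star_eq, hF.isSelfAdjoint.star_eq] at this

theorem pvm_simultaneous_implies_commute {H : Type*} [NormedAddCommGroup H]
    [InnerProductSpace ℂ H] [FiniteDimensional ℂ H]
    {ΩA ΩB Ω : Type*} [Fintype ΩA] [Fintype ΩB] [Fintype Ω]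
    [DecidableEq ΩA] [DecidableEq ΩB]
    (A : ΩA → (H →L[ℂ] H)) (B : ΩB → (H →L[ℂ] H))
    (hAproj : ∀ a, IsSelfAdjoint (A a) ∧ A a * A a = A a) (hAsum : ∑ a, A a = 1)
    (hBproj : ∀ b, IsSelfAdjoint (B b) ∧ B b * B b = B b) (hBsum : ∑ b, B b = 1)
    (F : Ω → (H →L[ℂ] H)) (hFpos : ∀ x, (F x).IsPositive) (hFsum : ∑ x, F x = 1)
    (fA : Ω → ΩA) (fB : Ω → ΩB)
    (hfA : ∀ a, A a = ∑ x ∈ Finset.univ.filter (fun x => fA x = a), F x)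
    (hfB : ∀ b, B b = ∑ x ∈ Finset.univ.filter (fun x => fB x = b), F x) :
    ∀ a b, A a * B b = B b * A a := by
  classical
  -- sums of positive operators are positive
  have hsumpos : ∀ (s : Finset Ω), (∑ x ∈ s, F x).IsPositive := fun s =>
    Finset.sum_induction F ContinuousLinearMap.IsPositive
      (fun _ _ h1 h2 => h1.add h2) ContinuousLinearMap.isPositive_zero
      (fun x _ => hFpos x)
  -- each F x is dominated by the corresponding A (fA x) and B (fB x)
  have hdomA : ∀ x, (A (fA x) - F x).IsPositive := by
    intro x
    have hx : x ∈ Finset.univ.filter (fun y => fA y = fA x) := by simp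
    have : A (fA x) - F x
        = ∑ y ∈ (Finset.univ.filter (fun y => fA y = fA x)).erase x, F y := by
      rw [hfA (fA x), ← Finset.add_sum_erase _ F hx]; abel
    rw [this]; exact hsumpos _
  have hdomB : ∀ x, (B (fB x) - F x).IsPositive := by
    intro x
    have hx : x ∈ Finset.univ.filter (fun y => fB y = fB x) := by simp
    have : B (fB x) - F x
        = ∑ y ∈ (Finset.univ.filter (fun y => fB y = fB x)).erase x, F y := by
      rw [hfB (fB x), ← Finset.add_sum_erase _ F hx]; abel
    rw [this]; exact hsumpos _
  -- absorption
  have habsA : ∀ x, F x * A (fA x) = F x ∧ A (fA x) * F x = F x := fun x =>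
    proj_dominates' (hAproj (fA x)).1 (hAproj (fA x)).2 (hFpos x) (hdomA x)
  have habsB : ∀ x, F x * B (fB x) = F x ∧ B (fB x) * F x = F x := fun x =>
    proj_dominates' (hBproj (fB x)).1 (hBproj (fB x)).2 (hFpos x) (hdomB x)
  -- orthogonality of the PVM A : A a * A a' = 0 for a ≠ a'
  have horthA : ∀ a a', a ≠ a' → A a * A a' = 0 := by
    intro a a' hne
    have hP : IsSelfAdjoint (1 - A a) :=
      (IsSelfAdjoint.one (R := H →L[ℂ] H)).sub (hAproj a).1
    have hP2 : (1 - A a) * (1 - A a) = 1 - A a := by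
      have := (hAproj a).2
      noncomm_ring [this]
    have hApos : (A a').IsPositive := proj_isPositive' (hAproj a').1 (hAproj a').2
    have hdiff : ((1 - A a) - A a' : H →L[ℂ] H).IsPositive := by
      have hmem : a ∈ (Finset.univ.erase a') := by
        simp [Finset.mem_erase, hne]
      have : (1 - A a) - A a' = ∑ a'' ∈ (Finset.univ.erase a').erase a, A a'' := by
        rw [← hAsum, ← Finset.add_sum_erase _ A (Finset.mem_univ a'),
          ← Finset.add_sum_erase _ A hmem]
        abel
      rw [this]
      exact Finset.sum_induction A ContinuousLinearMap.IsPositive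
        (fun _ _ h1 h2 => h1.add h2) ContinuousLinearMap.isPositive_zero
        (fun a'' _ => proj_isPositive' (hAproj a'').1 (hAproj a'').2)
    have := (proj_dominates' hP hP2 hApos hdiff).2
    have h2 : A a' - A a * A a' = A a' := by rwa [sub_mul, one_mul] at this
    exact sub_eq_self.mp h2
  -- A a * F x = (if fA x = a then F x else 0)
  have hAF : ∀ a x, A a * F x = if fA x = a then F x else 0 := by
    intro a x
    by_cases hax : fA x = a
    · subst hax; simp [(habsA x).2]
    · have h1 : A a * F x = A a * (A (fA x) * F x) := by rw [(habsA x).2]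
      rw [h1, ← mul_assoc, horthA a (fA x) (Ne.symm hax), zero_mul]
      simp [hax]
  have hFA : ∀ a x, F x * A a = if fA x = a then F x else 0 := by
    intro a x
    have := congrArg star (hAF a x)
    rw [star_mul, (hAproj a).1.star_eq, (hFpos x).isSelfAdjoint.star_eq] at this
    rw [this]
    split <;> simp [(hFpos x).isSelfAdjoint.star_eq]
  -- orthogonality of B and corresponding facts
  have horthB : ∀ b b', b ≠ b' → B b * B b' = 0 := by
    intro b b' hne
    have hP : IsSelfAdjoint (1 - B b) :=
      (IsSelfAdjoint.one (R := H →L[ℂ] H)).sub (hBproj b).1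
    have hP2 : (1 - B b) * (1 - B b) = 1 - B b := by
      have := (hBproj b).2
      noncomm_ring [this]
    have hBpos : (B b').IsPositive := proj_isPositive' (hBproj b').1 (hBproj b').2
    have hdiff : ((1 - B b) - B b' : H →L[ℂ] H).IsPositive := by
      have hmem : b ∈ (Finset.univ.erase b') := by
        simp [Finset.mem_erase, hne]
      have : (1 - B b) - B b' = ∑ b'' ∈ (Finset.univ.erase b').erase b, B b'' := by
        rw [← hBsum, ← Finset.add_sum_erase _ B (Finset.mem_univ b'),
          ← Finset.add_sum_erase _ B hmem]
        abel
      rw [this]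
      exact Finset.sum_induction B ContinuousLinearMap.IsPositive
        (fun _ _ h1 h2 => h1.add h2) ContinuousLinearMap.isPositive_zero
        (fun b'' _ => proj_isPositive' (hBproj b'').1 (hBproj b'').2)
    have := (proj_dominates' hP hP2 hBpos hdiff).2
    have h2 : B b' - B b * B b' = B b' := by rwa [sub_mul, one_mul] at this
    exact sub_eq_self.mp h2
  have hBF : ∀ b x, B b * F x = if fB x = b then F x else 0 := by
    intro b x
    by_cases hbx : fB x = b
    · subst hbx; simp [(habsB x).2]
    · have h1 : B b * F x = B b * (B (fB x) * F x) := by rw [(habsB x).2]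
      rw [h1, ← mul_assoc, horthB b (fB x) (Ne.symm hbx), zero_mul]
      simp [hbx]
  have hFB : ∀ b x, F x * B b = if fB x = b then F x else 0 := by
    intro b x
    have := congrArg star (hBF b x)
    rw [star_mul, (hBproj b).1.star_eq, (hFpos x).isSelfAdjoint.star_eq] at this
    rw [this]
    split <;> simp [(hFpos x).isSelfAdjoint.star_eq]
  -- main computation
  intro a b
  have hL : A a * B b = ∑ x, if fA x = a ∧ fB x = b then F x else 0 := by
    rw [hfB b, Finset.mul_sum]
    rw [Finset.sum_filter]
    rw [Finset.sum_congr rfl (fun x _ => ?_)]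
    by_cases hbx : fB x = b
    · simp [hAF a x, hbx]
    · simp [hbx]
  have hR : B b * A a = ∑ x, if fA x = a ∧ fB x = b then F x else 0 := by
    rw [hfA a, Finset.mul_sum]
    rw [Finset.sum_filter]
    rw [Finset.sum_congr rfl (fun x _ => ?_)]
    by_cases hax : fA x = a
    · simp [hBF b x, hax]
    · simp [hax]
  rw [hL, hR]
end

section
/- Let A = {A_a} and B = {B_b} be POVMs on a Hilbert space that are simultaneously measurable, i.e., there exists a POVM F and functions f_A, f_B with f_A(F) = A and f_B(F) = B. Then V(A)^{1/2}·V(B)^{1/2} ≥ (1/2)·max_{a,b} ‖[A_a, B_b]‖, where V(A) := max_a ‖A_a - A_a²‖ and V(B) := max_b ‖B_b - B_b²‖. -/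
open ContinuousLinearMap

set_option linter.unusedSectionVars false
set_option linter.unusedVariables false
set_option maxHeartbeats 1000000

section Helpers

variable {H : Type*} [NormedAddCommGroup H] [InnerProductSpace ℂ H] [CompleteSpace H]

local notation "⟪" x ", " y "⟫" => @inner ℂ _ _ x y

private lemma sa_inner_move {S : H →L[ℂ] H} (hS : IsSelfAdjoint S) (x y : H) :
    ⟪x, S y⟫ = ⟪S x, y⟫ := by
  conv_lhs => rw [← hS.adjoint_eq]
  rw [ContinuousLinearMap.adjoint_inner_right]

private lemma pos_cs_re {S : H →L[ℂ] H} (hS : S.IsPositive) (x y : H) :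
    (Complex.re ⟪x, S y⟫) ^ 2 ≤ Complex.re ⟪x, S x⟫ * Complex.re ⟪y, S y⟫ := by
  set p := Complex.re ⟪x, S x⟫ with hp
  set q := Complex.re ⟪y, S y⟫ with hq
  set r := Complex.re ⟪x, S y⟫ with hr
  have key : ∀ t : ℝ, 0 ≤ q * (t * t) + (2 * r) * t + p := by
    intro t
    have h0 := hS.re_inner_nonneg_right (x + (t : ℂ) • y)
    have hexp : ⟪x + (t:ℂ) • y, S (x + (t:ℂ) • y)⟫
        = ⟪x, S x⟫ + (t:ℂ) * ⟪x, S y⟫ + (t:ℂ) * ⟪y, S x⟫ + (t:ℂ) * (t:ℂ) * ⟪y, S y⟫ := by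
      rw [map_add, map_smul]
      simp only [inner_add_left, inner_add_right, inner_smul_left, inner_smul_right,
        Complex.conj_ofReal]
      ring
    have hsym : ⟪y, S x⟫ = (starRingEnd ℂ) ⟪x, S y⟫ := by
      rw [sa_inner_move hS.isSelfAdjoint x y, ← inner_conj_symm]
    rw [hexp, hsym] at h0
    simp only [RCLike.re_to_complex] at h0
    simp only [Complex.add_re, Complex.mul_re, Complex.ofReal_re, Complex.ofReal_im,
      Complex.conj_re, Complex.conj_im, Complex.mul_im, ← hp, ← hq, ← hr] at h0
    nlinarith [h0]
  have hd := discrim_le_zero key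
  rw [discrim] at hd
  nlinarith [hd]

private lemma pos_cs {S : H →L[ℂ] H} (hS : S.IsPositive) (x y : H) :
    ‖⟪x, S y⟫‖ ≤ Real.sqrt (Complex.re ⟪x, S x⟫) * Real.sqrt (Complex.re ⟪y, S y⟫) := by
  by_cases hc : ⟪x, S y⟫ = 0
  · rw [hc]
    simp only [norm_zero]
    positivity
  · set c := ⟪x, S y⟫ with hcdef
    have hcn : (‖c‖ : ℝ) ≠ 0 := norm_ne_zero_iff.mpr hc
    set a : ℂ := (‖c‖ : ℂ) / c with ha
    have hac : a * c = (‖c‖ : ℂ) := div_mul_cancel₀ _ hc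
    have hanorm : ‖a‖ = 1 := by
      rw [ha, norm_div, Complex.norm_real, Real.norm_eq_abs, abs_of_nonneg (norm_nonneg c),
        div_self hcn]
    have h1 : ⟪x, S (a • y)⟫ = a * c := by
      rw [map_smul, inner_smul_right]
    have h2 : Complex.re ⟪a • y, S (a • y)⟫ = Complex.re ⟪y, S y⟫ := by
      rw [map_smul, inner_smul_right, inner_smul_left, ← mul_assoc]
      have hone : (starRingEnd ℂ) a * a = 1 := by
        rw [mul_comm, Complex.mul_conj]
        norm_cast
        rw [Complex.normSq_eq_norm_sq, hanorm]
        norm_num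
      rw [mul_comm a, hone, one_mul]
    have hkey := pos_cs_re hS x (a • y)
    rw [h1, hac, h2] at hkey
    simp only [Complex.ofReal_re] at hkey
    have hp : 0 ≤ Complex.re ⟪x, S x⟫ := by
      have := hS.re_inner_nonneg_right x
      simpa [RCLike.re_to_complex] using this
    calc ‖c‖ = Real.sqrt (‖c‖ ^ 2) := (Real.sqrt_sq (norm_nonneg c)).symm
    _ ≤ Real.sqrt (Complex.re ⟪x, S x⟫ * Complex.re ⟪y, S y⟫) := Real.sqrt_le_sqrt hkey
    _ = _ := Real.sqrt_mul hp _

private lemma sqrt_cs2 {a b c d : ℝ} (ha : 0 ≤ a) (hb : 0 ≤ b) (hc : 0 ≤ c) (hd : 0 ≤ d) :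
    Real.sqrt a * Real.sqrt b + Real.sqrt c * Real.sqrt d
      ≤ Real.sqrt (a + c) * Real.sqrt (b + d) := by
  have hrw : Real.sqrt (a+c) * Real.sqrt (b+d) = Real.sqrt ((a+c)*(b+d)) :=
    (Real.sqrt_mul (by linarith) _).symm
  rw [hrw]
  rw [Real.le_sqrt (by positivity) (by positivity)]
  have h1 := Real.sq_sqrt ha
  have h2 := Real.sq_sqrt hb
  have h3 := Real.sq_sqrt hc
  have h4 := Real.sq_sqrt hd
  nlinarith [sq_nonneg (Real.sqrt a * Real.sqrt d - Real.sqrt c * Real.sqrt b),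
    Real.sqrt_nonneg a, Real.sqrt_nonneg b, Real.sqrt_nonneg c, Real.sqrt_nonneg d]

private lemma re_form_le (C : H →L[ℂ] H) (u : H) :
    Complex.re ⟪u, C u⟫ ≤ ‖C‖ * ‖u‖ ^ 2 := by
  calc Complex.re ⟪u, C u⟫ ≤ ‖⟪u, C u⟫‖ := Complex.re_le_norm _
  _ ≤ ‖u‖ * ‖C u‖ := norm_inner_le_norm _ _
  _ ≤ ‖u‖ * (‖C‖ * ‖u‖) := by
      have := C.le_opNorm u
      have h0 : (0:ℝ) ≤ ‖u‖ := norm_nonneg _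
      nlinarith
  _ = ‖C‖ * ‖u‖ ^ 2 := by ring

private lemma form_bound {X P2 P3 P4 : H →L[ℂ] H}
    (hX : X.IsPositive) (h2 : P2.IsPositive) (h3 : P3.IsPositive) (h4 : P4.IsPositive)
    (hsum : X + P2 + P3 + P4 = 1) (u v : H) :
    ‖⟪u, ((X + P2) * (X + P3) - X) v⟫‖ ≤
      Real.sqrt ‖(X + P2) - (X + P2) ^ 2‖ * Real.sqrt ‖(X + P3) - (X + P3) ^ 2‖
        * (‖u‖ * ‖v‖) := by
  have h4' : P4 = 1 - X - P2 - P3 := by rw [← hsum]; abel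
  set A := X + P2 with hA
  set B := X + P3 with hB
  have hAsa : IsSelfAdjoint A := (hX.add h2).isSelfAdjoint
  have hBsa : IsSelfAdjoint B := (hX.add h3).isSelfAdjoint
  have hIA : IsSelfAdjoint (1 - A) := IsSelfAdjoint.sub (IsSelfAdjoint.one _) hAsa
  have hIB : IsSelfAdjoint (1 - B) := IsSelfAdjoint.sub (IsSelfAdjoint.one _) hBsa
  have hid : A * B - X = A * P3 * (1 - B) - A * P4 * B - (1 - A) * X * (1 - B)
      + (1 - A) * P2 * B := by
    rw [hA, hB, h4']; noncomm_ring
  have emove : ∀ (L S R : H →L[ℂ] H), IsSelfAdjoint L → ∀ w w',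
      ⟪w, (L * S * R) w'⟫ = ⟪L w, S (R w')⟫ := by
    intro L S R hL w w'
    rw [ContinuousLinearMap.mul_apply, ContinuousLinearMap.mul_apply, sa_inner_move hL]
  have hsplit : ⟪u, (A * B - X) v⟫
      = ⟪A u, P3 ((1 - B) v)⟫ - ⟪A u, P4 (B v)⟫ - ⟪(1 - A) u, X ((1 - B) v)⟫
        + ⟪(1 - A) u, P2 (B v)⟫ := by
    rw [hid]
    simp only [ContinuousLinearMap.sub_apply, ContinuousLinearMap.add_apply,
      inner_sub_right, inner_add_right]
    rw [emove _ _ _ hAsa, emove _ _ _ hAsa, emove _ _ _ hIA, emove _ _ _ hIA]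
    simp [ContinuousLinearMap.sub_apply, ContinuousLinearMap.one_apply]
  -- quadratic form abbreviations
  set q3u := Complex.re ⟪A u, P3 (A u)⟫ with hq3u
  set q4u := Complex.re ⟪A u, P4 (A u)⟫ with hq4u
  set qXu := Complex.re ⟪(1-A) u, X ((1-A) u)⟫ with hqXu
  set q2u := Complex.re ⟪(1-A) u, P2 ((1-A) u)⟫ with hq2u
  set q3v := Complex.re ⟪(1-B) v, P3 ((1-B) v)⟫ with hq3v
  set q4v := Complex.re ⟪B v, P4 (B v)⟫ with hq4v
  set qXv := Complex.re ⟪(1-B) v, X ((1-B) v)⟫ with hqXv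
  set q2v := Complex.re ⟪B v, P2 (B v)⟫ with hq2v
  have nn : ∀ (S : H →L[ℂ] H), S.IsPositive → ∀ w, 0 ≤ Complex.re ⟪w, S w⟫ := by
    intro S hS w
    simpa [RCLike.re_to_complex] using hS.re_inner_nonneg_right w
  have step1 : ‖⟪u, (A * B - X) v⟫‖ ≤
      Real.sqrt q3u * Real.sqrt q3v + Real.sqrt q4u * Real.sqrt q4v
      + (Real.sqrt qXu * Real.sqrt qXv + Real.sqrt q2u * Real.sqrt q2v) := by
    rw [hsplit]
    have t1 := pos_cs h3 (A u) ((1-B) v)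
    have t2 := pos_cs h4 (A u) (B v)
    have t3 := pos_cs hX ((1-A) u) ((1-B) v)
    have t4 := pos_cs h2 ((1-A) u) (B v)
    calc ‖⟪A u, P3 ((1 - B) v)⟫ - ⟪A u, P4 (B v)⟫ - ⟪(1 - A) u, X ((1 - B) v)⟫
        + ⟪(1 - A) u, P2 (B v)⟫‖
        ≤ ‖⟪A u, P3 ((1 - B) v)⟫‖ + ‖⟪A u, P4 (B v)⟫‖ + ‖⟪(1 - A) u, X ((1 - B) v)⟫‖
          + ‖⟪(1 - A) u, P2 (B v)⟫‖ := by
          calc ‖⟪A u, P3 ((1 - B) v)⟫ - ⟪A u, P4 (B v)⟫ - ⟪(1 - A) u, X ((1 - B) v)⟫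
              + ⟪(1 - A) u, P2 (B v)⟫‖
              ≤ ‖⟪A u, P3 ((1 - B) v)⟫ - ⟪A u, P4 (B v)⟫ - ⟪(1 - A) u, X ((1 - B) v)⟫‖
                + ‖⟪(1 - A) u, P2 (B v)⟫‖ := norm_add_le _ _
            _ ≤ ‖⟪A u, P3 ((1 - B) v)⟫ - ⟪A u, P4 (B v)⟫‖ + ‖⟪(1 - A) u, X ((1 - B) v)⟫‖
                + ‖⟪(1 - A) u, P2 (B v)⟫‖ := by
                  gcongr; exact norm_sub_le _ _
            _ ≤ ‖⟪A u, P3 ((1 - B) v)⟫‖ + ‖⟪A u, P4 (B v)⟫‖ + ‖⟪(1 - A) u, X ((1 - B) v)⟫‖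
                + ‖⟪(1 - A) u, P2 (B v)⟫‖ := by
                  gcongr; exact norm_sub_le _ _
      _ ≤ Real.sqrt q3u * Real.sqrt q3v + Real.sqrt q4u * Real.sqrt q4v
          + Real.sqrt qXu * Real.sqrt qXv + Real.sqrt q2u * Real.sqrt q2v := by
          gcongr
      _ = Real.sqrt q3u * Real.sqrt q3v + Real.sqrt q4u * Real.sqrt q4v
          + (Real.sqrt qXu * Real.sqrt qXv + Real.sqrt q2u * Real.sqrt q2v) := by ring
  have step2 : Real.sqrt q3u * Real.sqrt q3v + Real.sqrt q4u * Real.sqrt q4v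
      + (Real.sqrt qXu * Real.sqrt qXv + Real.sqrt q2u * Real.sqrt q2v)
      ≤ Real.sqrt (q3u + q4u + (qXu + q2u)) * Real.sqrt (q3v + q4v + (qXv + q2v)) := by
    have c1 := sqrt_cs2 (nn _ h3 (A u)) (nn _ h3 ((1-B) v)) (nn _ h4 (A u)) (nn _ h4 (B v))
    have c2 := sqrt_cs2 (nn _ hX ((1-A) u)) (nn _ hX ((1-B) v)) (nn _ h2 ((1-A) u)) (nn _ h2 (B v))
    have c3 := sqrt_cs2 (add_nonneg (nn _ h3 (A u)) (nn _ h4 (A u)))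
      (add_nonneg (nn _ h3 ((1-B) v)) (nn _ h4 (B v)))
      (add_nonneg (nn _ hX ((1-A) u)) (nn _ h2 ((1-A) u)))
      (add_nonneg (nn _ hX ((1-B) v)) (nn _ h2 (B v)))
    calc _ ≤ Real.sqrt (q3u + q4u) * Real.sqrt (q3v + q4v)
        + Real.sqrt (qXu + q2u) * Real.sqrt (qXv + q2v) := by
          exact add_le_add c1 c2
      _ ≤ _ := c3
  -- u-side total
  have hu : q3u + q4u + (qXu + q2u) = Complex.re ⟪u, (A - A ^ 2) u⟫ := by
    have hop : A - A ^ 2 = A * P3 * A + A * P4 * A + ((1-A) * X * (1-A) + (1-A) * P2 * (1-A)) := by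
      rw [hA, h4']; noncomm_ring
    rw [hop]
    simp only [ContinuousLinearMap.add_apply, inner_add_right, Complex.add_re]
    rw [emove _ _ _ hAsa, emove _ _ _ hAsa, emove _ _ _ hIA, emove _ _ _ hIA]
  have hv : q3v + q4v + (qXv + q2v) = Complex.re ⟪v, (B - B ^ 2) v⟫ := by
    have hop : B - B ^ 2 = (1-B) * P3 * (1-B) + B * P4 * B + ((1-B) * X * (1-B) + B * P2 * B) := by
      rw [hB, h4']; noncomm_ring
    rw [hop]
    simp only [ContinuousLinearMap.add_apply, inner_add_right, Complex.add_re]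
    rw [emove _ _ _ hIB, emove _ _ _ hBsa, emove _ _ _ hIB, emove _ _ _ hBsa]
  have hfin : Real.sqrt (q3u + q4u + (qXu + q2u)) * Real.sqrt (q3v + q4v + (qXv + q2v))
      ≤ Real.sqrt ‖A - A ^ 2‖ * Real.sqrt ‖B - B ^ 2‖ * (‖u‖ * ‖v‖) := by
    have hu' : q3u + q4u + (qXu + q2u) ≤ ‖A - A ^ 2‖ * ‖u‖ ^ 2 := by
      rw [hu]; exact re_form_le _ u
    have hv' : q3v + q4v + (qXv + q2v) ≤ ‖B - B ^ 2‖ * ‖v‖ ^ 2 := by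
      rw [hv]; exact re_form_le _ v
    calc Real.sqrt (q3u + q4u + (qXu + q2u)) * Real.sqrt (q3v + q4v + (qXv + q2v))
        ≤ Real.sqrt (‖A - A ^ 2‖ * ‖u‖ ^ 2) * Real.sqrt (‖B - B ^ 2‖ * ‖v‖ ^ 2) := by
          exact mul_le_mul (Real.sqrt_le_sqrt hu') (Real.sqrt_le_sqrt hv')
            (Real.sqrt_nonneg _) (Real.sqrt_nonneg _)
      _ = Real.sqrt ‖A - A ^ 2‖ * Real.sqrt ‖B - B ^ 2‖ * (‖u‖ * ‖v‖) := by
          rw [Real.sqrt_mul (norm_nonneg _), Real.sqrt_mul (norm_nonneg _),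
            Real.sqrt_sq (norm_nonneg u), Real.sqrt_sq (norm_nonneg v)]
          ring
  calc ‖⟪u, (A * B - X) v⟫‖ ≤ _ := step1
    _ ≤ _ := step2
    _ ≤ _ := hfin

private lemma comm_bound {X P2 P3 P4 : H →L[ℂ] H}
    (hX : X.IsPositive) (h2 : P2.IsPositive) (h3 : P3.IsPositive) (h4 : P4.IsPositive)
    (hsum : X + P2 + P3 + P4 = 1) :
    ‖(X + P2) * (X + P3) - (X + P3) * (X + P2)‖ ≤
      2 * (Real.sqrt ‖(X + P2) - (X + P2) ^ 2‖ * Real.sqrt ‖(X + P3) - (X + P3) ^ 2‖) := by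
  set A := X + P2 with hA
  set B := X + P3 with hB
  have hAsa : IsSelfAdjoint A := (hX.add h2).isSelfAdjoint
  have hBsa : IsSelfAdjoint B := (hX.add h3).isSelfAdjoint
  have hXsa : IsSelfAdjoint X := hX.isSelfAdjoint
  set K := Real.sqrt ‖A - A ^ 2‖ * Real.sqrt ‖B - B ^ 2‖ with hK
  have hK0 : 0 ≤ K := mul_nonneg (Real.sqrt_nonneg _) (Real.sqrt_nonneg _)
  have hform : ∀ u v : H, ‖⟪u, (A * B - B * A) v⟫‖ ≤ 2 * K * (‖u‖ * ‖v‖) := by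
    intro u v
    have hsplitv : (A * B - B * A) v = (A * B - X) v - (B * A - X) v := by
      simp only [ContinuousLinearMap.sub_apply]
      abel
    have hconj : ⟪u, (B * A - X) v⟫ = (starRingEnd ℂ) ⟪v, (A * B - X) u⟫ := by
      have e1 : ⟪u, (B * A) v⟫ = (starRingEnd ℂ) ⟪v, (A * B) u⟫ := by
        rw [ContinuousLinearMap.mul_apply, ContinuousLinearMap.mul_apply, sa_inner_move hBsa, sa_inner_move hAsa]
        exact (inner_conj_symm _ _).symm
      have e2 : ⟪u, X v⟫ = (starRingEnd ℂ) ⟪v, X u⟫ := by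
        rw [sa_inner_move hXsa]
        exact (inner_conj_symm _ _).symm
      simp only [ContinuousLinearMap.sub_apply, inner_sub_right, map_sub]
      rw [← e1, ← e2]
    calc ‖⟪u, (A * B - B * A) v⟫‖
        = ‖⟪u, (A * B - X) v⟫ - (starRingEnd ℂ) ⟪v, (A * B - X) u⟫‖ := by
          rw [hsplitv, inner_sub_right, hconj]
      _ ≤ ‖⟪u, (A * B - X) v⟫‖ + ‖(starRingEnd ℂ) ⟪v, (A * B - X) u⟫‖ := norm_sub_le _ _
      _ = ‖⟪u, (A * B - X) v⟫‖ + ‖⟪v, (A * B - X) u⟫‖ := by rw [RCLike.norm_conj]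
      _ ≤ K * (‖u‖ * ‖v‖) + K * (‖v‖ * ‖u‖) := by
          exact add_le_add (form_bound hX h2 h3 h4 hsum u v) (form_bound hX h2 h3 h4 hsum v u)
      _ = 2 * K * (‖u‖ * ‖v‖) := by ring
  refine opNorm_le_bound _ (by positivity) fun v => ?_
  set w := (A * B - B * A) v with hw
  by_cases hw0 : w = 0
  · rw [hw0]; simp; positivity
  · have h1 : ‖w‖ ^ 2 = ‖⟪w, (A * B - B * A) v⟫‖ := by
      rw [← hw, inner_self_eq_norm_sq_to_K (𝕜 := ℂ) w]
      rw [norm_pow]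
      norm_num
    have h2' := hform w v
    rw [← h1] at h2'
    have hwpos : 0 < ‖w‖ := norm_pos_iff.mpr hw0
    nlinarith [hwpos]

end Helpers

private lemma sum_isPositive {H : Type*} [NormedAddCommGroup H] [InnerProductSpace ℂ H]
    [CompleteSpace H] {ι : Type*} (s : Finset ι) (f : ι → (H →L[ℂ] H))
    (hf : ∀ i ∈ s, (f i).IsPositive) : (∑ i ∈ s, f i).IsPositive :=
  Finset.sum_induction f (fun T => T.IsPositive) (fun _ _ ha hb => ha.add hb)
    ContinuousLinearMap.isPositive_zero hf

theorem simultaneous_measurable_intrinsic_uncertainty {H : Type*} [NormedAddCommGroup H]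
    [InnerProductSpace ℂ H] [CompleteSpace H]
    {ΩA ΩB Ω : Type*} [Fintype ΩA] [Fintype ΩB] [Fintype Ω]
    [Nonempty ΩA] [Nonempty ΩB]
    [DecidableEq ΩA] [DecidableEq ΩB]
    (A : ΩA → (H →L[ℂ] H)) (B : ΩB → (H →L[ℂ] H))
    (hApos : ∀ a, (A a).IsPositive) (hAsum : ∑ a, A a = 1)
    (hBpos : ∀ b, (B b).IsPositive) (hBsum : ∑ b, B b = 1)
    (F : Ω → (H →L[ℂ] H)) (hFpos : ∀ x, (F x).IsPositive) (hFsum : ∑ x, F x = 1)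
    (fA : Ω → ΩA) (fB : Ω → ΩB)
    (hfA : ∀ a, A a = ∑ x ∈ Finset.univ.filter (fun x => fA x = a), F x)
    (hfB : ∀ b, B b = ∑ x ∈ Finset.univ.filter (fun x => fB x = b), F x) :
    Real.sqrt (⨆ a, ‖A a - (A a) ^ 2‖) * Real.sqrt (⨆ b, ‖B b - (B b) ^ 2‖) ≥
      (1 / 2) * ⨆ ab : ΩA × ΩB, ‖A ab.1 * B ab.2 - B ab.2 * A ab.1‖ := by
  classical
  set VA := ⨆ a, ‖A a - (A a) ^ 2‖ with hVA
  set VB := ⨆ b, ‖B b - (B b) ^ 2‖ with hVB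
  have hVAle : ∀ a, ‖A a - (A a) ^ 2‖ ≤ VA := fun a =>
    le_ciSup (f := fun a => ‖A a - (A a) ^ 2‖) (Set.Finite.bddAbove (Set.finite_range _)) a
  have hVBle : ∀ b, ‖B b - (B b) ^ 2‖ ≤ VB := fun b =>
    le_ciSup (f := fun b => ‖B b - (B b) ^ 2‖) (Set.Finite.bddAbove (Set.finite_range _)) b
  -- per-pair bound
  have hpair : ∀ (a : ΩA) (b : ΩB),
      ‖A a * B b - B b * A a‖ ≤ 2 * (Real.sqrt VA * Real.sqrt VB) := by
    intro a b
    set X := ∑ x ∈ Finset.univ.filter (fun x => fA x = a ∧ fB x = b), F x with hXd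
    set P2 := ∑ x ∈ Finset.univ.filter (fun x => fA x = a ∧ ¬ fB x = b), F x with hP2d
    set P3 := ∑ x ∈ Finset.univ.filter (fun x => ¬ fA x = a ∧ fB x = b), F x with hP3d
    set P4 := ∑ x ∈ Finset.univ.filter (fun x => ¬ fA x = a ∧ ¬ fB x = b), F x with hP4d
    have hX : X.IsPositive := sum_isPositive _ _ fun i _ => hFpos i
    have h2 : P2.IsPositive := sum_isPositive _ _ fun i _ => hFpos i
    have h3 : P3.IsPositive := sum_isPositive _ _ fun i _ => hFpos i
    have h4 : P4.IsPositive := sum_isPositive _ _ fun i _ => hFpos i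
    have hAeq : A a = X + P2 := by
      rw [hfA a, ← Finset.sum_filter_add_sum_filter_not
        (Finset.univ.filter (fun x => fA x = a)) (fun x => fB x = b) F]
      rw [Finset.filter_filter, Finset.filter_filter]
    have hBeq : B b = X + P3 := by
      rw [hfB b, ← Finset.sum_filter_add_sum_filter_not
        (Finset.univ.filter (fun x => fB x = b)) (fun x => fA x = a) F]
      rw [Finset.filter_filter, Finset.filter_filter]
      congr 1
      · apply Finset.sum_congr _ (fun _ _ => rfl)
        apply Finset.filter_congr
        intro x _
        simp [and_comm]
      · apply Finset.sum_congr _ (fun _ _ => rfl)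
        apply Finset.filter_congr
        intro x _
        simp [and_comm]
    have hsum : X + P2 + P3 + P4 = 1 := by
      rw [← hFsum]
      rw [← Finset.sum_filter_add_sum_filter_not Finset.univ (fun x => fA x = a) F]
      rw [← Finset.sum_filter_add_sum_filter_not
        (Finset.univ.filter (fun x => fA x = a)) (fun x => fB x = b) F]
      rw [← Finset.sum_filter_add_sum_filter_not
        (Finset.univ.filter (fun x => ¬ fA x = a)) (fun x => fB x = b) F]
      rw [Finset.filter_filter, Finset.filter_filter, Finset.filter_filter,
        Finset.filter_filter]
      rw [hXd, hP2d, hP3d, hP4d]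
      abel
    have := comm_bound hX h2 h3 h4 hsum
    rw [← hAeq, ← hBeq] at this
    refine this.trans ?_
    have h1 : Real.sqrt ‖A a - (A a) ^ 2‖ ≤ Real.sqrt VA := Real.sqrt_le_sqrt (hVAle a)
    have h2' : Real.sqrt ‖B b - (B b) ^ 2‖ ≤ Real.sqrt VB := Real.sqrt_le_sqrt (hVBle b)
    have := mul_le_mul h1 h2' (Real.sqrt_nonneg _) (Real.sqrt_nonneg _)
    linarith
  rw [ge_iff_le]
  have hsup : (⨆ ab : ΩA × ΩB, ‖A ab.1 * B ab.2 - B ab.2 * A ab.1‖)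
      ≤ 2 * (Real.sqrt VA * Real.sqrt VB) := by
    exact ciSup_le fun ab => hpair ab.1 ab.2
  linarith
end

section
/- Let A = {A_a}, B = {B_b} be POVMs and suppose F = {F_x} is a projection valued measure (each F_x a projection, mutually orthogonal, summing to 1) with marginal maps f_A, f_B. Then with α := max_a ‖f_A(F)_a - A_a‖ and β := max_b ‖f_B(F)_b - B_b‖, one has 2αβ + α + β ≥ max_{a,b} ‖[A_a, B_b]‖. -/
open ContinuousLinearMap in
lemma proj_apply_norm_le {H : Type*} [NormedAddCommGroup H]
    [InnerProductSpace ℂ H] [CompleteSpace H]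
    (P : H →L[ℂ] H) (hsa : IsSelfAdjoint P) (hidem : P * P = P) (w : H) :
    ‖P w‖ ≤ ‖w‖ := by
  have h2 : ‖P w‖ ^ 2 ≤ ‖w‖ * ‖P w‖ := by
    have : (inner ℂ (P w) (P w) : ℂ) = inner ℂ w (P w) := by
      nth_rw 1 [← hsa.adjoint_eq]
      rw [ContinuousLinearMap.adjoint_inner_left]
      have : P (P w) = P w := by
        have := congrArg (fun T : H →L[ℂ] H => T w) hidem
        simpa using this
      rw [this]
    have hre := congrArg (RCLike.re (K := ℂ)) this
    rw [inner_self_eq_norm_sq (𝕜 := ℂ)] at hre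
    calc ‖P w‖ ^ 2 = RCLike.re (inner ℂ w (P w) : ℂ) := by rw [← hre]
      _ ≤ ‖(inner ℂ w (P w) : ℂ)‖ := RCLike.re_le_norm _
      _ ≤ ‖w‖ * ‖P w‖ := norm_inner_le_norm _ _
  rcases eq_or_lt_of_le (norm_nonneg (P w)) with h0 | h0
  · rw [← h0]; exact norm_nonneg w
  · have := le_of_mul_le_mul_right (by nlinarith : ‖P w‖ * ‖P w‖ ≤ ‖w‖ * ‖P w‖) h0
    exact this

open ContinuousLinearMap in
lemma proj_comm_norm_le {H : Type*} [NormedAddCommGroup H]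
    [InnerProductSpace ℂ H] [CompleteSpace H]
    (P X : H →L[ℂ] H) (hsa : IsSelfAdjoint P) (hidem : P * P = P) :
    ‖P * X - X * P‖ ≤ ‖X‖ := by
  have hPP : ∀ z, P (P z) = P z := fun z => by
    have := congrArg (fun T : H →L[ℂ] H => T z) hidem; simpa using this
  refine ContinuousLinearMap.opNorm_le_bound _ (norm_nonneg X) (fun v => ?_)
  set a := P (X (v - P v)) with ha
  set b := X (P v) - P (X (P v)) with hb
  have hval : (P * X - X * P) v = a + (-b) := by
    simp only [ha, hb, ContinuousLinearMap.sub_apply, ContinuousLinearMap.mul_apply, map_sub]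
    abel
  have hab : (inner ℂ a (-b) : ℂ) = 0 := by
    rw [inner_neg_right, ha]
    nth_rw 1 [← hsa.adjoint_eq]
    rw [ContinuousLinearMap.adjoint_inner_left]
    have : P b = 0 := by
      rw [hb, map_sub, hPP, sub_self]
    rw [this, inner_zero_right, neg_zero]
  have hsq : ‖a + (-b)‖ ^ 2 = ‖a‖ ^ 2 + ‖b‖ ^ 2 := by
    have h := norm_add_sq_eq_norm_sq_add_norm_sq_of_inner_eq_zero a (-b) hab
    rw [norm_neg] at h
    simpa [pow_two] using h
  -- Pythagoras for v
  have hvinner : (inner ℂ (P v) (v - P v) : ℂ) = 0 := by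
    nth_rw 1 [← hsa.adjoint_eq]
    rw [ContinuousLinearMap.adjoint_inner_left, map_sub, hPP, sub_self, inner_zero_right]
  have hv : ‖P v‖ ^ 2 + ‖v - P v‖ ^ 2 = ‖v‖ ^ 2 := by
    have h := norm_add_sq_eq_norm_sq_add_norm_sq_of_inner_eq_zero (P v) (v - P v) hvinner
    rw [add_sub_cancel] at h
    simpa [pow_two] using h.symm
  have hna : ‖a‖ ≤ ‖X‖ * ‖v - P v‖ := by
    calc ‖a‖ ≤ ‖X (v - P v)‖ := proj_apply_norm_le P hsa hidem _
      _ ≤ ‖X‖ * ‖v - P v‖ := le_opNorm X _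
  have hnb : ‖b‖ ≤ ‖X‖ * ‖P v‖ := by
    have h1 : IsSelfAdjoint (1 - P) := (IsSelfAdjoint.one (H →L[ℂ] H)).sub hsa
    have h2 : (1 - P) * (1 - P) = 1 - P := by
      simp only [sub_mul, mul_sub, one_mul, mul_one, hidem]; abel
    have : b = (1 - P) (X (P v)) := by
      simp [hb, ContinuousLinearMap.sub_apply]
    rw [this]
    calc ‖(1 - P) (X (P v))‖ ≤ ‖X (P v)‖ := proj_apply_norm_le _ h1 h2 _
      _ ≤ ‖X‖ * ‖P v‖ := le_opNorm X _
  rw [hval]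
  have hXv : 0 ≤ ‖X‖ * ‖v‖ := mul_nonneg (norm_nonneg _) (norm_nonneg _)
  have hfin : ‖a + (-b)‖ ^ 2 ≤ (‖X‖ * ‖v‖) ^ 2 := by
    rw [hsq]
    have h1 : ‖a‖ ^ 2 ≤ (‖X‖ * ‖v - P v‖) ^ 2 := by
      apply pow_le_pow_left₀ (norm_nonneg _) hna
    have h2 : ‖b‖ ^ 2 ≤ (‖X‖ * ‖P v‖) ^ 2 := by
      apply pow_le_pow_left₀ (norm_nonneg _) hnb
    have he : (‖X‖ * ‖v - P v‖) ^ 2 + (‖X‖ * ‖P v‖) ^ 2 = (‖X‖ * ‖v‖) ^ 2 := by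
      rw [mul_pow, mul_pow, mul_pow, ← mul_add,
        show ‖v - P v‖ ^ 2 + ‖P v‖ ^ 2 = ‖v‖ ^ 2 from by linarith]
    linarith
  calc ‖a + (-b)‖ = Real.sqrt (‖a + (-b)‖ ^ 2) := by rw [Real.sqrt_sq (norm_nonneg _)]
    _ ≤ Real.sqrt ((‖X‖ * ‖v‖) ^ 2) := Real.sqrt_le_sqrt hfin
    _ = ‖X‖ * ‖v‖ := Real.sqrt_sq hXv

lemma pvm_sum_mul_sum {H : Type*} [NormedAddCommGroup H]
    [InnerProductSpace ℂ H] [CompleteSpace H]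
    {Ω : Type*} [Fintype Ω] [DecidableEq Ω]
    (F : Ω → (H →L[ℂ] H))
    (hFproj : ∀ x, IsSelfAdjoint (F x) ∧ F x * F x = F x)
    (hForth : ∀ x y, x ≠ y → F x * F y = 0)
    (s t : Finset Ω) :
    (∑ x ∈ s, F x) * (∑ y ∈ t, F y) = ∑ x ∈ s ∩ t, F x := by
  rw [Finset.sum_mul_sum]
  have h1 : ∀ x ∈ s, ∑ y ∈ t, F x * F y = if x ∈ t then F x else 0 := by
    intro x _
    rw [show (∑ y ∈ t, F x * F y) = ∑ y ∈ t, if y = x then F x else 0 from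
      Finset.sum_congr rfl (fun y _ => by
        by_cases h : y = x
        · simp [h, (hFproj x).2]
        · simp [h, hForth x y (fun hxy => h hxy.symm)])]
    exact Finset.sum_ite_eq' t x (fun _ => F x)
  rw [Finset.sum_congr rfl h1, Finset.sum_ite_mem]

theorem tradeoff_pvm_instrument {H : Type*} [NormedAddCommGroup H]
    [InnerProductSpace ℂ H] [CompleteSpace H]
    {ΩA ΩB Ω : Type*} [Fintype ΩA] [Fintype ΩB] [Fintype Ω]
    [Nonempty ΩA] [Nonempty ΩB] [DecidableEq ΩA] [DecidableEq ΩB] [DecidableEq Ω]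
    (A : ΩA → (H →L[ℂ] H)) (B : ΩB → (H →L[ℂ] H))
    (hApos : ∀ a, (A a).IsPositive) (hAsum : ∑ a, A a = 1)
    (hBpos : ∀ b, (B b).IsPositive) (hBsum : ∑ b, B b = 1)
    (F : Ω → (H →L[ℂ] H))
    (hFproj : ∀ x, IsSelfAdjoint (F x) ∧ F x * F x = F x)
    (hForth : ∀ x y, x ≠ y → F x * F y = 0)
    (hFsum : ∑ x, F x = 1)
    (fA : Ω → ΩA) (fB : Ω → ΩB) :
    2 * (⨆ a, ‖(∑ x ∈ Finset.univ.filter (fun x => fA x = a), F x) - A a‖) *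
        (⨆ b, ‖(∑ x ∈ Finset.univ.filter (fun x => fB x = b), F x) - B b‖) +
      (⨆ a, ‖(∑ x ∈ Finset.univ.filter (fun x => fA x = a), F x) - A a‖) +
      (⨆ b, ‖(∑ x ∈ Finset.univ.filter (fun x => fB x = b), F x) - B b‖) ≥
    ⨆ ab : ΩA × ΩB, ‖A ab.1 * B ab.2 - B ab.2 * A ab.1‖ := by
  set P : ΩA → (H →L[ℂ] H) := fun a => ∑ x ∈ Finset.univ.filter (fun x => fA x = a), F x
    with hP
  set Q : ΩB → (H →L[ℂ] H) := fun b => ∑ x ∈ Finset.univ.filter (fun x => fB x = b), F x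
    with hQ
  set α := ⨆ a, ‖P a - A a‖ with hα
  set β := ⨆ b, ‖Q b - B b‖ with hβ
  have hPsa : ∀ a, IsSelfAdjoint (P a) := fun a => by
    rw [hP]
    refine (star_sum _ _).trans (Finset.sum_congr rfl (fun x _ => (hFproj x).1))
  have hQsa : ∀ b, IsSelfAdjoint (Q b) := fun b => by
    rw [hQ]
    refine (star_sum _ _).trans (Finset.sum_congr rfl (fun x _ => (hFproj x).1))
  have hPidem : ∀ a, P a * P a = P a := fun a => by
    rw [hP]; simp only
    rw [pvm_sum_mul_sum F hFproj hForth, Finset.inter_self]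
  have hQidem : ∀ b, Q b * Q b = Q b := fun b => by
    rw [hQ]; simp only
    rw [pvm_sum_mul_sum F hFproj hForth, Finset.inter_self]
  have hcomm : ∀ a b, P a * Q b = Q b * P a := fun a b => by
    rw [hP, hQ]; simp only
    rw [pvm_sum_mul_sum F hFproj hForth, pvm_sum_mul_sum F hFproj hForth,
      Finset.inter_comm]
  have hbddA : BddAbove (Set.range fun a => ‖P a - A a‖) :=
    Set.Finite.bddAbove (Set.finite_range _)
  have hbddB : BddAbove (Set.range fun b => ‖Q b - B b‖) :=
    Set.Finite.bddAbove (Set.finite_range _)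
  have hαle : ∀ a, ‖P a - A a‖ ≤ α := fun a => le_ciSup hbddA a
  have hβle : ∀ b, ‖Q b - B b‖ ≤ β := fun b => le_ciSup hbddB b
  have hα0 : 0 ≤ α := le_trans (norm_nonneg _) (hαle (Classical.arbitrary ΩA))
  have hβ0 : 0 ≤ β := le_trans (norm_nonneg _) (hβle (Classical.arbitrary ΩB))
  rw [ge_iff_le]
  refine ciSup_le fun ab => ?_
  obtain ⟨a, b⟩ := ab
  set DA := P a - A a with hDA
  set DB := Q b - B b with hDB
  have hid : A a * B b - B b * A a =
      ((DB * P a - P a * DB) + (Q b * DA - DA * Q b) + (DA * DB - DB * DA))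
        + (P a * Q b - Q b * P a) := by
    have h1 : A a = P a - DA := by rw [hDA]; abel
    have h2 : B b = Q b - DB := by rw [hDB]; abel
    rw [h1, h2]; noncomm_ring
  have key : ‖A a * B b - B b * A a‖ ≤ β + α + 2 * α * β := by
    rw [hid, hcomm a b, sub_self, add_zero]
    calc ‖(DB * P a - P a * DB) + (Q b * DA - DA * Q b) + (DA * DB - DB * DA)‖
        ≤ ‖DB * P a - P a * DB‖ + ‖Q b * DA - DA * Q b‖ + ‖DA * DB - DB * DA‖ := by
          refine le_trans (norm_add_le _ _) ?_
          exact add_le_add (norm_add_le _ _) le_rfl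
      _ ≤ β + α + 2 * α * β := by
          have e1 : ‖DB * P a - P a * DB‖ ≤ β := by
            rw [show DB * P a - P a * DB = -(P a * DB - DB * P a) from by abel, norm_neg]
            exact le_trans (proj_comm_norm_le (P a) DB (hPsa a) (hPidem a)) (hβle b)
          have e2 : ‖Q b * DA - DA * Q b‖ ≤ α :=
            le_trans (proj_comm_norm_le (Q b) DA (hQsa b) (hQidem b)) (hαle a)
          have e3 : ‖DA * DB - DB * DA‖ ≤ 2 * α * β := by
            have h1 := norm_sub_le (DA * DB) (DB * DA)
            have h2 := norm_mul_le DA DB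
            have h3 := norm_mul_le DB DA
            have := hαle a; have := hβle b
            nlinarith [norm_nonneg DA, norm_nonneg DB]
          linarith
  linarith
end

section
/- Let A = {A_a}, B = {B_b} be projection valued measures on a Hilbert space, F = {F_x} any POVM and f_A, f_B coarse-graining functions. Set α := max_a ‖f_A(F)_a - A_a‖ and β := max_b ‖f_B(F)_b - B_b‖. Then 2αβ + α + β + 4α^{1/2}β^{1/2} ≥ max_{a,b} ‖[A_a, B_b]‖. -/
open ContinuousLinearMap RCLike Finset
open scoped InnerProduct ComplexConjugate

local notation "⟪" x ", " y "⟫_ℂ" => @inner ℂ _ _ x y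

section helpers
variable {H : Type*} [NormedAddCommGroup H] [InnerProductSpace ℂ H] [CompleteSpace H]

local notation "⟪" x ", " y "⟫" => @inner ℂ _ _ x y

/-- Cauchy–Schwarz for the sesquilinear form of a positive operator. -/
lemma pos_form_cs (T : H →L[ℂ] H) (hsa : IsSelfAdjoint T)
    (hpos : ∀ v : H, 0 ≤ re ⟪v, T v⟫) (x y : H) :
    ‖⟪x, T y⟫‖ ≤ Real.sqrt (re ⟪x, T x⟫) * Real.sqrt (re ⟪y, T y⟫) := by
  have ha0 : 0 ≤ re ⟪x, T x⟫ := hpos x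
  have hb0 : 0 ≤ re ⟪y, T y⟫ := hpos y
  set a : ℝ := re ⟪x, T x⟫
  set b : ℝ := re ⟪y, T y⟫
  set z : ℂ := ⟪x, T y⟫ with hz
  have hsymm : ∀ u v : H, ⟪T u, v⟫ = ⟪u, T v⟫ := fun u v => hsa.isSymmetric u v
  set c : ℂ := if z = 0 then 1 else z / ‖z‖ with hc
  have hcnorm : ‖c‖ = 1 := by
    by_cases h : z = 0
    · simp [hc, h]
    · simp [hc, h, norm_div, norm_ne_zero_iff.mpr h]
  have hcz : (starRingEnd ℂ) c * z = (‖z‖ : ℂ) := by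
    by_cases h : z = 0
    · simp [hc, h]
    · have hz0 : (‖z‖ : ℝ) ≠ 0 := norm_ne_zero_iff.mpr h
      rw [hc, if_neg h, map_div₀, Complex.conj_ofReal, div_mul_eq_mul_div,
        RCLike.conj_mul]
      rw [sq]
      push_cast
      field_simp
      rw [sq]; exact mul_div_cancel_right₀ _ (by simpa using h)
  have key : ∀ t : ℝ, 0 ≤ b * (t * t) + (2 * ‖z‖) * t + a := by
    intro t
    have h0 := hpos (c • x + (t : ℂ) • y)
    have hTv : T (c • x + (t : ℂ) • y) = c • T x + (t : ℂ) • T y := by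
      simp [map_add, map_smul]
    rw [hTv] at h0
    have hyx : ⟪y, T x⟫ = (starRingEnd ℂ) z := by
      rw [hz, ← hsymm x y, inner_conj_symm]
    have hexp : ⟪c • x + (t : ℂ) • y, c • T x + (t : ℂ) • T y⟫
        = ((starRingEnd ℂ) c * c) * ⟪x, T x⟫ + ((t : ℂ) * ((starRingEnd ℂ) c * z + c * (starRingEnd ℂ) z))
          + ((t : ℂ) * t) * ⟪y, T y⟫ := by
      simp only [inner_add_left, inner_add_right, inner_smul_left, inner_smul_right, hyx,
        Complex.conj_ofReal, ← hz]
      ring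
    have hcc : (starRingEnd ℂ) c * c = 1 := by
      rw [RCLike.conj_mul, hcnorm]; norm_num
    have hccz : c * (starRingEnd ℂ) z = (‖z‖ : ℂ) := by
      have := congrArg (starRingEnd ℂ) hcz
      simpa [mul_comm] using this
    rw [hexp, hcc, hcz, hccz, one_mul] at h0
    have hre : re (⟪x, T x⟫ + ((t : ℂ) * ((‖z‖ : ℂ) + (‖z‖ : ℂ)))
        + ((t : ℂ) * t) * ⟪y, T y⟫) = a + t * (2 * ‖z‖) + (t * t) * b := by
      have hrfl : ∀ w : ℂ, re w = w.re := fun _ => rfl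
      simp only [hrfl, Complex.add_re, Complex.mul_re, Complex.mul_im, Complex.ofReal_re,
        Complex.ofReal_im, Complex.add_im, Complex.ofReal_add]
      rw [show a = (inner ℂ x (T x) : ℂ).re from rfl, show b = (inner ℂ y (T y) : ℂ).re from rfl]
      ring
    rw [hre] at h0
    linarith
  have hd := discrim_le_zero key
  rw [discrim] at hd
  have hz2 : ‖z‖ ^ 2 ≤ a * b := by nlinarith
  calc ‖z‖ = Real.sqrt (‖z‖ ^ 2) := (Real.sqrt_sq (norm_nonneg z)).symm
    _ ≤ Real.sqrt (a * b) := Real.sqrt_le_sqrt hz2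
    _ = Real.sqrt a * Real.sqrt b := Real.sqrt_mul ha0 _

/-- opNorm from a sesquilinear bound. -/
lemma norm_le_of_form (T : H →L[ℂ] H) (c : ℝ) (hc : 0 ≤ c)
    (h : ∀ x y : H, ‖⟪x, T y⟫‖ ≤ c * (‖x‖ * ‖y‖)) : ‖T‖ ≤ c := by
  refine ContinuousLinearMap.opNorm_le_bound _ hc (fun y => ?_)
  by_cases h0 : T y = 0
  · rw [h0, norm_zero]; positivity
  · have hTy : 0 < ‖T y‖ := norm_pos_iff.mpr h0
    have h2 : ‖T y‖ * ‖T y‖ ≤ c * (‖T y‖ * ‖y‖) := by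
      have h3 : (‖T y‖ : ℝ) * ‖T y‖ = re ⟪T y, T y⟫ := by
        rw [inner_self_eq_norm_sq (𝕜 := ℂ) (T y)]; ring
      calc ‖T y‖ * ‖T y‖ = re ⟪T y, T y⟫ := h3
        _ ≤ ‖⟪T y, T y⟫‖ := RCLike.re_le_norm _
        _ ≤ c * (‖T y‖ * ‖y‖) := h (T y) y
    nlinarith [hTy]

end helpers
section more
variable {H : Type*} [NormedAddCommGroup H] [InnerProductSpace ℂ H] [CompleteSpace H]

local notation "⟪" x ", " y "⟫" => @inner ℂ _ _ x y

lemma proj_inner_sq {A : H →L[ℂ] H} (hsa : IsSelfAdjoint A) (hidem : A * A = A) (x : H) :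
    re ⟪x, A x⟫ = ‖A x‖ ^ 2 := by
  have hsymm : ∀ u v : H, ⟪A u, v⟫ = ⟪u, A v⟫ := fun u v => hsa.isSymmetric u v
  have h1 : A (A x) = A x := by
    conv_rhs => rw [← hidem]
    rfl
  have h2 : ⟪x, A x⟫ = ⟪A x, A x⟫ := by
    have h3 := hsymm x (A x)
    rw [h1] at h3
    exact h3.symm
  rw [h2, inner_self_eq_norm_sq]

lemma reflect_norm {A : H →L[ℂ] H} (hsa : IsSelfAdjoint A) (hidem : A * A = A) (x : H) :
    ‖x - (2 : ℂ) • A x‖ = ‖x‖ := by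
  have hsymm : ∀ u v : H, ⟪A u, v⟫ = ⟪u, A v⟫ := fun u v => hsa.isSymmetric u v
  have hAx : re ⟪x, A x⟫ = ‖A x‖ ^ 2 := proj_inner_sq hsa hidem x
  have h2 : ‖x - (2 : ℂ) • A x‖ ^ 2 = ‖x‖ ^ 2 := by
    rw [norm_sub_sq (𝕜 := ℂ), inner_smul_right, norm_smul]
    have hre2 : re ((2 : ℂ) * ⟪x, A x⟫) = 2 * re ⟪x, A x⟫ := by
      have hrfl : ∀ w : ℂ, re w = w.re := fun _ => rfl
      simp [hrfl, Complex.mul_re]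
    have hn2 : ‖(2 : ℂ)‖ = 2 := by norm_num
    rw [hre2, hn2, hAx]
    ring
  calc ‖x - (2 : ℂ) • A x‖ = Real.sqrt (‖x - (2 : ℂ) • A x‖ ^ 2) :=
        (Real.sqrt_sq (norm_nonneg _)).symm
    _ = Real.sqrt (‖x‖ ^ 2) := by rw [h2]
    _ = ‖x‖ := Real.sqrt_sq (norm_nonneg _)

lemma proj_shift_norm {B : H →L[ℂ] H} (hsa : IsSelfAdjoint B) (hidem : B * B = B) :
    ‖B - (1/2 : ℂ) • 1‖ ≤ 1/2 := by
  refine ContinuousLinearMap.opNorm_le_bound _ (by norm_num) (fun x => ?_)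
  have happ : (B - (1/2 : ℂ) • 1) x = (-(1/2 : ℂ)) • (x - (2 : ℂ) • B x) := by
    simp only [ContinuousLinearMap.sub_apply, ContinuousLinearMap.smul_apply,
      ContinuousLinearMap.one_apply, smul_sub, smul_smul]
    norm_num
    abel
  rw [happ, norm_smul]
  have : ‖(-(1/2) : ℂ)‖ = 1/2 := by norm_num
  rw [this, reflect_norm hsa hidem]

lemma contraction_sq {G : H →L[ℂ] H} (hsa : IsSelfAdjoint G)
    (hpos : ∀ v : H, 0 ≤ re ⟪v, G v⟫) (h1 : ∀ v : H, re ⟪v, G v⟫ ≤ ‖v‖ ^ 2) (x : H) :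
    ‖G x‖ ^ 2 ≤ re ⟪x, G x⟫ := by
  have hsymm : ∀ u v : H, ⟪G u, v⟫ = ⟪u, G v⟫ := fun u v => hsa.isSymmetric u v
  have hid : ‖G x‖ ^ 2 = ‖⟪x, G (G x)⟫‖ := by
    rw [← hsymm x (G x), inner_self_eq_norm_sq_to_K]
    rw [norm_pow]
    norm_num
  have hcs := pos_form_cs G hsa hpos x (G x)
  rw [← hid] at hcs
  have h3 : Real.sqrt (re ⟪G x, G (G x)⟫) ≤ ‖G x‖ := by
    have := h1 (G x)
    calc Real.sqrt (re ⟪G x, G (G x)⟫) ≤ Real.sqrt (‖G x‖ ^ 2) := Real.sqrt_le_sqrt this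
      _ = ‖G x‖ := Real.sqrt_sq (norm_nonneg _)
  have h4 : ‖G x‖ ^ 2 ≤ Real.sqrt (re ⟪x, G x⟫) * ‖G x‖ := by
    calc ‖G x‖ ^ 2 ≤ Real.sqrt (re ⟪x, G x⟫) * Real.sqrt (re ⟪G x, G (G x)⟫) := hcs
      _ ≤ Real.sqrt (re ⟪x, G x⟫) * ‖G x‖ := by
          exact mul_le_mul_of_nonneg_left h3 (Real.sqrt_nonneg _)
  nlinarith [Real.sq_sqrt (hpos x), Real.sqrt_nonneg (re ⟪x, G x⟫), norm_nonneg (G x),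
    sq_nonneg (‖G x‖ - Real.sqrt (re ⟪x, G x⟫))]

lemma contraction_shift_norm {G : H →L[ℂ] H} (hsa : IsSelfAdjoint G)
    (hpos : ∀ v : H, 0 ≤ re ⟪v, G v⟫) (h1 : ∀ v : H, re ⟪v, G v⟫ ≤ ‖v‖ ^ 2) :
    ‖G - (1/2 : ℂ) • 1‖ ≤ 1/2 := by
  refine ContinuousLinearMap.opNorm_le_bound _ (by norm_num) (fun x => ?_)
  have happ : (G - (1/2 : ℂ) • 1) x = (-(1/2 : ℂ)) • (x - (2 : ℂ) • G x) := by
    simp only [ContinuousLinearMap.sub_apply, ContinuousLinearMap.smul_apply,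
      ContinuousLinearMap.one_apply, smul_sub, smul_smul]
    norm_num
    abel
  rw [happ, norm_smul]
  have hh : ‖(-(1/2) : ℂ)‖ = 1/2 := by norm_num
  rw [hh]
  have h2 : ‖x - (2 : ℂ) • G x‖ ^ 2 ≤ ‖x‖ ^ 2 := by
    rw [norm_sub_sq (𝕜 := ℂ), inner_smul_right, norm_smul]
    have hre2 : re ((2 : ℂ) * ⟪x, G x⟫) = 2 * re ⟪x, G x⟫ := by
      have hrfl : ∀ w : ℂ, re w = w.re := fun _ => rfl
      simp [hrfl, Complex.mul_re]
    have hn2 : ‖(2 : ℂ)‖ = 2 := by norm_num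
    rw [hre2, hn2]
    have := contraction_sq hsa hpos h1 x
    nlinarith
  have h3 : ‖x - (2 : ℂ) • G x‖ ≤ ‖x‖ := by
    nlinarith [norm_nonneg (x - (2 : ℂ) • G x), norm_nonneg x]
  linarith

lemma eps_bound {G A : H →L[ℂ] H} (hAsa : IsSelfAdjoint A) (hA2 : A * A = A)
    {α : ℝ} (hα : ‖G - A‖ ≤ α) (x : H) :
    re ⟪x, G x⟫ - ‖G x‖ ^ 2 ≤ α * ‖x‖ ^ 2 := by
  have hsymm : ∀ u v : H, ⟪A u, v⟫ = ⟪u, A v⟫ := fun u v => hAsa.isSymmetric u v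
  set D := G - A with hD
  have hGx : G x = A x + D x := by simp [hD]
  have hAx : re ⟪x, A x⟫ = ‖A x‖ ^ 2 := proj_inner_sq hAsa hA2 x
  have hre : re ⟪x, G x⟫ = ‖A x‖ ^ 2 + re ⟪x, D x⟫ := by
    rw [hGx, inner_add_right, map_add, hAx]
  have hnorm : ‖G x‖ ^ 2 = ‖A x‖ ^ 2 + 2 * re ⟪A x, D x⟫ + ‖D x‖ ^ 2 := by
    rw [hGx, norm_add_sq (𝕜 := ℂ)]
  have hcomb : re ⟪x, D x⟫ - 2 * re ⟪A x, D x⟫ = re ⟪x - (2 : ℂ) • A x, D x⟫ := by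
    rw [inner_sub_left, inner_smul_left, map_sub]
    have hrfl : ∀ w : ℂ, re w = w.re := fun _ => rfl
    simp [hrfl, Complex.mul_re]
    try ring
  have hDle : ‖D x‖ ≤ α * ‖x‖ := by
    calc ‖D x‖ ≤ ‖D‖ * ‖x‖ := D.le_opNorm x
      _ ≤ α * ‖x‖ := by
          exact mul_le_mul_of_nonneg_right hα (norm_nonneg x)
  have hmain : re ⟪x - (2 : ℂ) • A x, D x⟫ ≤ ‖x‖ * (α * ‖x‖) := by
    calc re ⟪x - (2 : ℂ) • A x, D x⟫ ≤ ‖⟪x - (2 : ℂ) • A x, D x⟫‖ := RCLike.re_le_norm _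
      _ ≤ ‖x - (2 : ℂ) • A x‖ * ‖D x‖ := norm_inner_le_norm _ _
      _ = ‖x‖ * ‖D x‖ := by rw [reflect_norm hAsa hA2]
      _ ≤ ‖x‖ * (α * ‖x‖) := mul_le_mul_of_nonneg_left hDle (norm_nonneg x)
  nlinarith [sq_nonneg (‖D x‖)]

lemma cross_identity {Ω : Type*} [Fintype Ω] [DecidableEq Ω] (F : Ω → H →L[ℂ] H)
    (hFsum : ∑ w, F w = 1) (s t : Finset Ω)
    (hGsa : IsSelfAdjoint (∑ u ∈ s, F u)) (x y : H) :
    ∑ w : Ω, ⟪(if w ∈ s then x else 0) - (∑ u ∈ s, F u) x,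
      (F w) ((if w ∈ t then y else 0) - (∑ u ∈ t, F u) y)⟫
    = ⟪x, (∑ u ∈ s ∩ t, F u) y⟫ - ⟪x, (∑ u ∈ s, F u) ((∑ u ∈ t, F u) y)⟫ := by
  have hisa : ∀ (r : Finset Ω) (u v : H), ∑ w ∈ r, ⟪u, F w v⟫ = ⟪u, (∑ w ∈ r, F w) v⟫ := by
    intro r u v
    rw [ContinuousLinearMap.sum_apply, inner_sum]
  have hsymmG : ∀ u v : H, ⟪(∑ u ∈ s, F u) u, v⟫ = ⟪u, (∑ u ∈ s, F u) v⟫ :=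
    fun u v => hGsa.isSymmetric u v
  set G : H →L[ℂ] H := ∑ u ∈ s, F u with hGdef
  set HH : H →L[ℂ] H := ∑ u ∈ t, F u with hHdef
  have hterm : ∀ w ∈ (Finset.univ : Finset Ω),
      ⟪(if w ∈ s then x else 0) - G x, F w ((if w ∈ t then y else 0) - HH y)⟫
      = (⟪(if w ∈ s then x else 0), F w (if w ∈ t then y else 0)⟫
        - ⟪(if w ∈ s then x else 0), F w (HH y)⟫)
        - (⟪G x, F w (if w ∈ t then y else 0)⟫ - ⟪G x, F w (HH y)⟫) := by
    intro w _
    rw [map_sub, inner_sub_left, inner_sub_right, inner_sub_right]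
    try ring
  rw [Finset.sum_congr rfl hterm, Finset.sum_sub_distrib, Finset.sum_sub_distrib,
    Finset.sum_sub_distrib]
  have S1 : ∑ w : Ω, ⟪(if w ∈ s then x else 0), F w (if w ∈ t then y else 0)⟫
      = ⟪x, (∑ u ∈ s ∩ t, F u) y⟫ := by
    have h1 : ∀ w ∈ (Finset.univ : Finset Ω),
        ⟪(if w ∈ s then x else 0), F w (if w ∈ t then y else 0)⟫
        = if w ∈ s ∩ t then ⟪x, F w y⟫ else 0 := by
      intro w _
      by_cases hw1 : w ∈ s <;> by_cases hw2 : w ∈ t <;>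
        simp [hw1, hw2, Finset.mem_inter]
    rw [Finset.sum_congr rfl h1, Finset.sum_ite_mem, Finset.univ_inter, hisa]
  have S2 : ∑ w : Ω, ⟪(if w ∈ s then x else 0), F w (HH y)⟫ = ⟪x, G (HH y)⟫ := by
    have h1 : ∀ w ∈ (Finset.univ : Finset Ω), ⟪(if w ∈ s then x else 0), F w (HH y)⟫
        = if w ∈ s then ⟪x, F w (HH y)⟫ else 0 := by
      intro w _
      by_cases hw1 : w ∈ s <;> simp [hw1]
    rw [Finset.sum_congr rfl h1, Finset.sum_ite_mem, Finset.univ_inter, hisa, ← hGdef]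
  have S3 : ∑ w : Ω, ⟪G x, F w (if w ∈ t then y else 0)⟫ = ⟪x, G (HH y)⟫ := by
    have h1 : ∀ w ∈ (Finset.univ : Finset Ω), ⟪G x, F w (if w ∈ t then y else 0)⟫
        = if w ∈ t then ⟪G x, F w y⟫ else 0 := by
      intro w _
      by_cases hw1 : w ∈ t <;> simp [hw1]
    rw [Finset.sum_congr rfl h1, Finset.sum_ite_mem, Finset.univ_inter, hisa, ← hHdef,
      hsymmG x (HH y)]
  have S4 : ∑ w : Ω, ⟪G x, F w (HH y)⟫ = ⟪x, G (HH y)⟫ := by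
    rw [hisa Finset.univ (G x) (HH y), hFsum, ContinuousLinearMap.one_apply,
      hsymmG x (HH y)]
  rw [S1, S2, S3, S4]
  ring

end more

theorem tradeoff_pvm_targets {H : Type*} [NormedAddCommGroup H]
    [InnerProductSpace ℂ H] [CompleteSpace H]
    {ΩA ΩB Ω : Type*} [Fintype ΩA] [Fintype ΩB] [Fintype Ω]
    [Nonempty ΩA] [Nonempty ΩB] [DecidableEq ΩA] [DecidableEq ΩB]
    (A : ΩA → (H →L[ℂ] H)) (B : ΩB → (H →L[ℂ] H))
    (hAproj : ∀ a, IsSelfAdjoint (A a) ∧ A a * A a = A a) (hAsum : ∑ a, A a = 1)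
    (hBproj : ∀ b, IsSelfAdjoint (B b) ∧ B b * B b = B b) (hBsum : ∑ b, B b = 1)
    (F : Ω → (H →L[ℂ] H)) (hFpos : ∀ x, (F x).IsPositive) (hFsum : ∑ x, F x = 1)
    (fA : Ω → ΩA) (fB : Ω → ΩB)
    (α β : ℝ)
    (hα : α = ⨆ a, ‖(∑ x ∈ Finset.univ.filter (fun x => fA x = a), F x) - A a‖)
    (hβ : β = ⨆ b, ‖(∑ x ∈ Finset.univ.filter (fun x => fB x = b), F x) - B b‖) :
    2 * α * β + α + β + 4 * Real.sqrt α * Real.sqrt β ≥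
      ⨆ ab : ΩA × ΩB, ‖A ab.1 * B ab.2 - B ab.2 * A ab.1‖ := by
  classical
  have hαa : ∀ a, ‖(∑ x ∈ Finset.univ.filter (fun x => fA x = a), F x) - A a‖ ≤ α := by
    intro a
    rw [hα]
    exact le_ciSup (f := fun a => ‖(∑ x ∈ Finset.univ.filter (fun x => fA x = a), F x) - A a‖)
      (Set.finite_range _).bddAbove a
  have hβb : ∀ b, ‖(∑ x ∈ Finset.univ.filter (fun x => fB x = b), F x) - B b‖ ≤ β := by
    intro b
    rw [hβ]
    exact le_ciSup (f := fun b => ‖(∑ x ∈ Finset.univ.filter (fun x => fB x = b), F x) - B b‖)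
      (Set.finite_range _).bddAbove b
  have hα0 : 0 ≤ α := le_trans (norm_nonneg _) (hαa (Classical.arbitrary ΩA))
  have hβ0 : 0 ≤ β := le_trans (norm_nonneg _) (hβb (Classical.arbitrary ΩB))
  -- general facts about sums of the POVM elements
  have hFsa : ∀ w, IsSelfAdjoint (F w) := fun w => (hFpos w).isSelfAdjoint
  have hsum_sa : ∀ s : Finset Ω, IsSelfAdjoint (∑ u ∈ s, F u) := by
    intro s
    have : star (∑ u ∈ s, F u) = ∑ u ∈ s, F u := by
      rw [star_sum]
      exact Finset.sum_congr rfl (fun w _ => hFsa w)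
    exact this
  have hform_nonneg : ∀ (s : Finset Ω) (v : H), 0 ≤ re ⟪v, (∑ u ∈ s, F u) v⟫_ℂ := by
    intro s v
    rw [ContinuousLinearMap.sum_apply, inner_sum, map_sum]
    exact Finset.sum_nonneg fun w _ => (hFpos w).re_inner_nonneg_right v
  have hform_le : ∀ (s : Finset Ω) (v : H), re ⟪v, (∑ u ∈ s, F u) v⟫_ℂ ≤ ‖v‖ ^ 2 := by
    intro s v
    have hsplit : (∑ u ∈ s, F u) + (∑ u ∈ Finset.univ \ s, F u) = 1 := by
      rw [← Finset.sum_union Finset.disjoint_sdiff,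
        Finset.union_sdiff_of_subset (Finset.subset_univ s), hFsum]
    have h2 : re ⟪v, (∑ u ∈ s, F u) v⟫_ℂ + re ⟪v, (∑ u ∈ Finset.univ \ s, F u) v⟫_ℂ
        = ‖v‖ ^ 2 := by
      rw [← map_add, ← inner_add_right]
      have h3 : (∑ u ∈ s, F u) v + (∑ u ∈ Finset.univ \ s, F u) v = v := by
        rw [← ContinuousLinearMap.add_apply, hsplit, ContinuousLinearMap.one_apply]
      rw [h3, inner_self_eq_norm_sq]
    have := hform_nonneg (Finset.univ \ s) v
    linarith
  -- the cross bound coming from joint measurability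
  have hcross : ∀ (s t : Finset Ω) (γ δ : ℝ) (P Q : H →L[ℂ] H),
      IsSelfAdjoint P → P * P = P → IsSelfAdjoint Q → Q * Q = Q →
      ‖(∑ u ∈ s, F u) - P‖ ≤ γ → ‖(∑ u ∈ t, F u) - Q‖ ≤ δ →
      ∀ x y : H, ‖⟪x, (∑ u ∈ s ∩ t, F u) y⟫_ℂ - ⟪x, (∑ u ∈ s, F u) ((∑ u ∈ t, F u) y)⟫_ℂ‖
        ≤ (Real.sqrt γ * Real.sqrt δ) * (‖x‖ * ‖y‖) := by
    intro s t γ δ P Q hPsa hP2 hQsa hQ2 hPγ hQδ x y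
    have hγ0 : 0 ≤ γ := le_trans (norm_nonneg _) hPγ
    have hδ0 : 0 ≤ δ := le_trans (norm_nonneg _) hQδ
    have hid := cross_identity F hFsum s t (hsum_sa s) x y
    set p : Ω → H := fun w => (if w ∈ s then x else 0) - (∑ u ∈ s, F u) x with hp
    set q : Ω → H := fun w => (if w ∈ t then y else 0) - (∑ u ∈ t, F u) y with hq
    have ha0 : ∀ w, 0 ≤ re ⟪p w, F w (p w)⟫_ℂ := fun w => (hFpos w).re_inner_nonneg_right _
    have hb0 : ∀ w, 0 ≤ re ⟪q w, F w (q w)⟫_ℂ := fun w => (hFpos w).re_inner_nonneg_right _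
    have hdx : ∑ w : Ω, re ⟪p w, F w (p w)⟫_ℂ
        = re ⟪x, (∑ u ∈ s, F u) x⟫_ℂ - ‖(∑ u ∈ s, F u) x‖ ^ 2 := by
      have hid2 := cross_identity F hFsum s s (hsum_sa s) x x
      rw [Finset.inter_self] at hid2
      have hms : ∑ w : Ω, re ⟪p w, F w (p w)⟫_ℂ = re (∑ w : Ω, ⟪p w, F w (p w)⟫_ℂ) :=
        (map_sum re _ _).symm
      rw [hms, hp, hid2, map_sub]
      congr 1
      have hsym : ⟪(∑ u ∈ s, F u) x, (∑ u ∈ s, F u) x⟫_ℂ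
          = ⟪x, (∑ u ∈ s, F u) ((∑ u ∈ s, F u) x)⟫_ℂ :=
        (hsum_sa s).isSymmetric x ((∑ u ∈ s, F u) x)
      rw [← hsym, inner_self_eq_norm_sq]
    have hdy : ∑ w : Ω, re ⟪q w, F w (q w)⟫_ℂ
        = re ⟪y, (∑ u ∈ t, F u) y⟫_ℂ - ‖(∑ u ∈ t, F u) y‖ ^ 2 := by
      have hid2 := cross_identity F hFsum t t (hsum_sa t) y y
      rw [Finset.inter_self] at hid2
      have hms : ∑ w : Ω, re ⟪q w, F w (q w)⟫_ℂ = re (∑ w : Ω, ⟪q w, F w (q w)⟫_ℂ) :=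
        (map_sum re _ _).symm
      rw [hms, hq, hid2, map_sub]
      congr 1
      have hsym : ⟪(∑ u ∈ t, F u) y, (∑ u ∈ t, F u) y⟫_ℂ
          = ⟪y, (∑ u ∈ t, F u) ((∑ u ∈ t, F u) y)⟫_ℂ :=
        (hsum_sa t).isSymmetric y ((∑ u ∈ t, F u) y)
      rw [← hsym, inner_self_eq_norm_sq]
    have hex : re ⟪x, (∑ u ∈ s, F u) x⟫_ℂ - ‖(∑ u ∈ s, F u) x‖ ^ 2 ≤ γ * ‖x‖ ^ 2 :=
      eps_bound hPsa hP2 hPγ x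
    have hey : re ⟪y, (∑ u ∈ t, F u) y⟫_ℂ - ‖(∑ u ∈ t, F u) y‖ ^ 2 ≤ δ * ‖y‖ ^ 2 :=
      eps_bound hQsa hQ2 hQδ y
    have hsum_a0 : 0 ≤ ∑ w : Ω, re ⟪p w, F w (p w)⟫_ℂ :=
      Finset.sum_nonneg fun w _ => ha0 w
    have hsum_b0 : 0 ≤ ∑ w : Ω, re ⟪q w, F w (q w)⟫_ℂ :=
      Finset.sum_nonneg fun w _ => hb0 w
    calc ‖⟪x, (∑ u ∈ s ∩ t, F u) y⟫_ℂ - ⟪x, (∑ u ∈ s, F u) ((∑ u ∈ t, F u) y)⟫_ℂ‖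
        = ‖∑ w : Ω, ⟪p w, F w (q w)⟫_ℂ‖ := by rw [hid]
      _ ≤ ∑ w : Ω, ‖⟪p w, F w (q w)⟫_ℂ‖ := norm_sum_le _ _
      _ ≤ ∑ w : Ω, Real.sqrt (re ⟪p w, F w (p w)⟫_ℂ) * Real.sqrt (re ⟪q w, F w (q w)⟫_ℂ) := by
          refine Finset.sum_le_sum fun w _ => ?_
          exact pos_form_cs (F w) (hFsa w) (fun v => (hFpos w).re_inner_nonneg_right v) _ _
      _ ≤ Real.sqrt (∑ w : Ω, re ⟪p w, F w (p w)⟫_ℂ)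
            * Real.sqrt (∑ w : Ω, re ⟪q w, F w (q w)⟫_ℂ) := by
          rw [← Real.sqrt_mul hsum_a0]
          apply Real.le_sqrt_of_sq_le
          exact Finset.sum_sq_le_sum_mul_sum_of_sq_eq_mul Finset.univ
            (fun w _ => ha0 w) (fun w _ => hb0 w)
            (fun w _ => by rw [mul_pow, Real.sq_sqrt (ha0 w), Real.sq_sqrt (hb0 w)])
      _ ≤ Real.sqrt (γ * ‖x‖ ^ 2) * Real.sqrt (δ * ‖y‖ ^ 2) := by
          apply mul_le_mul
          · exact Real.sqrt_le_sqrt (by rw [hdx]; exact hex)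
          · exact Real.sqrt_le_sqrt (by rw [hdy]; exact hey)
          · exact Real.sqrt_nonneg _
          · exact Real.sqrt_nonneg _
      _ = (Real.sqrt γ * Real.sqrt δ) * (‖x‖ * ‖y‖) := by
          rw [Real.sqrt_mul hγ0, Real.sqrt_mul hδ0, Real.sqrt_sq (norm_nonneg x),
            Real.sqrt_sq (norm_nonneg y)]
          ring
  -- now the per-pair bound
  rw [ge_iff_le]
  refine ciSup_le ?_
  rintro ⟨a, b⟩
  have hDa : ‖(∑ x ∈ Finset.univ.filter (fun x => fA x = a), F x) - A a‖ ≤ α := hαa a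
  have hEb : ‖(∑ x ∈ Finset.univ.filter (fun x => fB x = b), F x) - B b‖ ≤ β := hβb b
  set sA : Finset Ω := Finset.univ.filter (fun x => fA x = a) with hsA
  set sB : Finset Ω := Finset.univ.filter (fun x => fB x = b) with hsB
  set G : H →L[ℂ] H := ∑ u ∈ sA, F u with hGdef
  set HB : H →L[ℂ] H := ∑ u ∈ sB, F u with hHdef
  have hGsa : IsSelfAdjoint G := hsum_sa sA
  have hHsa : IsSelfAdjoint HB := hsum_sa sB
  have hJsa : IsSelfAdjoint (∑ u ∈ sA ∩ sB, F u) := hsum_sa _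
  have hsymmG : ∀ u v : H, ⟪G u, v⟫_ℂ = ⟪u, G v⟫_ℂ := fun u v => hGsa.isSymmetric u v
  have hsymmH : ∀ u v : H, ⟪HB u, v⟫_ℂ = ⟪u, HB v⟫_ℂ := fun u v => hHsa.isSymmetric u v
  have hsymmJ : ∀ u v : H, ⟪(∑ u ∈ sA ∩ sB, F u) u, v⟫_ℂ = ⟪u, (∑ u ∈ sA ∩ sB, F u) v⟫_ℂ :=
    fun u v => hJsa.isSymmetric u v
  -- commutator of the two marginals
  have hGH : ‖G * HB - HB * G‖ ≤ 2 * (Real.sqrt α * Real.sqrt β) := by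
    apply norm_le_of_form _ _ (by positivity)
    intro x y
    have happ : ⟪x, (G * HB - HB * G) y⟫_ℂ
        = (⟪x, (∑ u ∈ sA ∩ sB, F u) y⟫_ℂ - ⟪x, HB (G y)⟫_ℂ)
          - (⟪x, (∑ u ∈ sA ∩ sB, F u) y⟫_ℂ - ⟪x, G (HB y)⟫_ℂ) := by
      rw [ContinuousLinearMap.sub_apply, inner_sub_right,
        ContinuousLinearMap.mul_apply, ContinuousLinearMap.mul_apply]
      ring
    have hb1 : ‖⟪x, (∑ u ∈ sA ∩ sB, F u) y⟫_ℂ - ⟪x, G (HB y)⟫_ℂ‖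
        ≤ (Real.sqrt α * Real.sqrt β) * (‖x‖ * ‖y‖) :=
      hcross sA sB α β (A a) (B b) (hAproj a).1 (hAproj a).2 (hBproj b).1 (hBproj b).2
        hDa hEb x y
    have hb2 : ‖⟪x, (∑ u ∈ sA ∩ sB, F u) y⟫_ℂ - ⟪x, HB (G y)⟫_ℂ‖
        ≤ (Real.sqrt α * Real.sqrt β) * (‖x‖ * ‖y‖) := by
      have hconj : ⟪x, (∑ u ∈ sA ∩ sB, F u) y⟫_ℂ - ⟪x, HB (G y)⟫_ℂ
          = (starRingEnd ℂ) (⟪y, (∑ u ∈ sA ∩ sB, F u) x⟫_ℂ - ⟪y, G (HB x)⟫_ℂ) := by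
        rw [map_sub]
        congr 1
        · calc ⟪x, (∑ u ∈ sA ∩ sB, F u) y⟫_ℂ
              = ⟪(∑ u ∈ sA ∩ sB, F u) x, y⟫_ℂ := (hsymmJ x y).symm
            _ = (starRingEnd ℂ) ⟪y, (∑ u ∈ sA ∩ sB, F u) x⟫_ℂ :=
                (inner_conj_symm ((∑ u ∈ sA ∩ sB, F u) x) y).symm
        · calc ⟪x, HB (G y)⟫_ℂ = ⟪HB x, G y⟫_ℂ := (hsymmH x (G y)).symm
            _ = ⟪G (HB x), y⟫_ℂ := (hsymmG (HB x) y).symm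
            _ = (starRingEnd ℂ) ⟪y, G (HB x)⟫_ℂ := (inner_conj_symm (G (HB x)) y).symm
      rw [hconj, RCLike.norm_conj]
      have := hcross sA sB α β (A a) (B b) (hAproj a).1 (hAproj a).2 (hBproj b).1 (hBproj b).2
        hDa hEb y x
      calc ‖⟪y, (∑ u ∈ sA ∩ sB, F u) x⟫_ℂ - ⟪y, G (HB x)⟫_ℂ‖
          ≤ (Real.sqrt α * Real.sqrt β) * (‖y‖ * ‖x‖) := this
        _ = (Real.sqrt α * Real.sqrt β) * (‖x‖ * ‖y‖) := by ring
    calc ‖⟪x, (G * HB - HB * G) y⟫_ℂ‖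
        ≤ ‖⟪x, (∑ u ∈ sA ∩ sB, F u) y⟫_ℂ - ⟪x, HB (G y)⟫_ℂ‖
          + ‖⟪x, (∑ u ∈ sA ∩ sB, F u) y⟫_ℂ - ⟪x, G (HB y)⟫_ℂ‖ := by
          rw [happ]; exact norm_sub_le _ _
      _ ≤ (Real.sqrt α * Real.sqrt β) * (‖x‖ * ‖y‖)
          + (Real.sqrt α * Real.sqrt β) * (‖x‖ * ‖y‖) := add_le_add hb2 hb1
      _ = 2 * (Real.sqrt α * Real.sqrt β) * (‖x‖ * ‖y‖) := by ring
  -- shift bounds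
  have hBshift : ‖B b - (1/2 : ℂ) • 1‖ ≤ 1/2 := proj_shift_norm (hBproj b).1 (hBproj b).2
  have hGshift : ‖G - (1/2 : ℂ) • 1‖ ≤ 1/2 :=
    contraction_shift_norm hGsa (hform_nonneg sA) (hform_le sA)
  -- piece 1
  have hpiece1 : ‖(A a - G) * B b - B b * (A a - G)‖ ≤ α := by
    have hid1 : (A a - G) * B b - B b * (A a - G)
        = (A a - G) * (B b - (1/2 : ℂ) • 1) - (B b - (1/2 : ℂ) • 1) * (A a - G) := by
      simp only [mul_sub, sub_mul, mul_smul_comm, smul_mul_assoc, mul_one, one_mul]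
      module
    have hAG : ‖A a - G‖ ≤ α := by rw [norm_sub_rev]; exact hDa
    calc ‖(A a - G) * B b - B b * (A a - G)‖
        = ‖(A a - G) * (B b - (1/2 : ℂ) • 1) - (B b - (1/2 : ℂ) • 1) * (A a - G)‖ := by
          rw [hid1]
      _ ≤ ‖(A a - G) * (B b - (1/2 : ℂ) • 1)‖ + ‖(B b - (1/2 : ℂ) • 1) * (A a - G)‖ :=
          norm_sub_le _ _
      _ ≤ ‖A a - G‖ * ‖B b - (1/2 : ℂ) • 1‖ + ‖B b - (1/2 : ℂ) • 1‖ * ‖A a - G‖ :=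
          add_le_add (norm_mul_le _ _) (norm_mul_le _ _)
      _ ≤ α * (1/2) + (1/2) * α := by
          apply add_le_add
          · exact mul_le_mul hAG hBshift (norm_nonneg _) hα0
          · exact mul_le_mul hBshift hAG (norm_nonneg _) (by norm_num)
      _ = α := by ring
  -- piece 2
  have hpiece2 : ‖G * (B b - HB) - (B b - HB) * G‖ ≤ β := by
    have hid2 : G * (B b - HB) - (B b - HB) * G
        = (G - (1/2 : ℂ) • 1) * (B b - HB) - (B b - HB) * (G - (1/2 : ℂ) • 1) := by
      simp only [mul_sub, sub_mul, mul_smul_comm, smul_mul_assoc, mul_one, one_mul]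
      module
    have hBH : ‖B b - HB‖ ≤ β := by rw [norm_sub_rev]; exact hEb
    calc ‖G * (B b - HB) - (B b - HB) * G‖
        = ‖(G - (1/2 : ℂ) • 1) * (B b - HB) - (B b - HB) * (G - (1/2 : ℂ) • 1)‖ := by
          rw [hid2]
      _ ≤ ‖(G - (1/2 : ℂ) • 1) * (B b - HB)‖ + ‖(B b - HB) * (G - (1/2 : ℂ) • 1)‖ :=
          norm_sub_le _ _
      _ ≤ ‖G - (1/2 : ℂ) • 1‖ * ‖B b - HB‖ + ‖B b - HB‖ * ‖G - (1/2 : ℂ) • 1‖ :=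
          add_le_add (norm_mul_le _ _) (norm_mul_le _ _)
      _ ≤ (1/2) * β + β * (1/2) := by
          apply add_le_add
          · exact mul_le_mul hGshift hBH (norm_nonneg _) (by norm_num)
          · exact mul_le_mul hBH hGshift (norm_nonneg _) hβ0
      _ = β := by ring
  -- decomposition
  have hdecomp : A a * B b - B b * A a
      = ((A a - G) * B b - B b * (A a - G)) + (G * (B b - HB) - (B b - HB) * G)
        + (G * HB - HB * G) := by noncomm_ring
  have hfinal : ‖A a * B b - B b * A a‖ ≤ α + β + 2 * (Real.sqrt α * Real.sqrt β) := by
    calc ‖A a * B b - B b * A a‖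
        ≤ ‖((A a - G) * B b - B b * (A a - G)) + (G * (B b - HB) - (B b - HB) * G)‖
          + ‖G * HB - HB * G‖ := by rw [hdecomp]; exact norm_add_le _ _
      _ ≤ (‖(A a - G) * B b - B b * (A a - G)‖ + ‖G * (B b - HB) - (B b - HB) * G‖)
          + ‖G * HB - HB * G‖ := by
          exact add_le_add (norm_add_le _ _) le_rfl
      _ ≤ (α + β) + 2 * (Real.sqrt α * Real.sqrt β) :=
          add_le_add (add_le_add hpiece1 hpiece2) hGH
      _ = α + β + 2 * (Real.sqrt α * Real.sqrt β) := by ring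
  have hprod : 0 ≤ α * β := mul_nonneg hα0 hβ0
  have hsqrt : 0 ≤ Real.sqrt α * Real.sqrt β :=
    mul_nonneg (Real.sqrt_nonneg _) (Real.sqrt_nonneg _)
  calc ‖A a * B b - B b * A a‖ ≤ α + β + 2 * (Real.sqrt α * Real.sqrt β) := hfinal
    _ ≤ 2 * α * β + α + β + 4 * Real.sqrt α * Real.sqrt β := by nlinarith
end
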